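/- arXiv:1312.4163 — 3 statements merged into one kernel-verified Lean document; each statement's English description precedes it below -/
import Mathlib

section
/- Let A be a real m×n matrix with m < n. Then every nonnegative K-sparse vector is exactly recovered by ℓ1-minimization — i.e., every x ∈ ℝ^n with x ≥ 0 and ‖x‖₀ ≤ K is the unique least ℓ1-norm nonnegative solution to the system Az = Ax — if and only if Aᵀ satisfies the range space property of order K. -/
open Matrix Finset

variable {n : ℕ}


/-- vectors vanishing on S -/
def Wsub (n : ℕ) (S : Finset (Fin n)) : Submodule ℝ (EuclideanSpace ℝ (Fin n)) where
  carrier := {v | ∀ i ∈ S, v i = 0}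
  add_mem' := by intro a b ha hb i hi; show a i + b i = 0; rw [ha i hi, hb i hi, add_zero]
  zero_mem' := by intro i _; rfl
  smul_mem' := by intro c a ha i hi; show c * a i = 0; rw [ha i hi, mul_zero]

/-- vectors vanishing off S -/
def Vsub (n : ℕ) (S : Finset (Fin n)) : Submodule ℝ (EuclideanSpace ℝ (Fin n)) where
  carrier := {v | ∀ i ∉ S, v i = 0}
  add_mem' := by intro a b ha hb i hi; show a i + b i = 0; rw [ha i hi, hb i hi, add_zero]
  zero_mem' := by intro i _; rfl
  smul_mem' := by intro c a ha i hi; show c * a i = 0; rw [ha i hi, mul_zero]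

lemma inner_eq (x y : EuclideanSpace ℝ (Fin n)) : (inner ℝ x y : ℝ) = ∑ i, x i * y i := by
  simp [PiLp.inner_apply, RCLike.inner_apply, mul_comm]

lemma single_mem_W {S : Finset (Fin n)} {i : Fin n} (hi : i ∉ S) :
    (EuclideanSpace.single i (1:ℝ)) ∈ Wsub n S := by
  intro j hj
  rw [EuclideanSpace.single_apply]
  simp only [ite_eq_right_iff]
  intro h; exact absurd (h ▸ hj) hi

lemma single_mem_V {S : Finset (Fin n)} {i : Fin n} (hi : i ∈ S) :
    (EuclideanSpace.single i (1:ℝ)) ∈ Vsub n S := by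
  intro j hj
  rw [EuclideanSpace.single_apply]
  simp only [ite_eq_right_iff]
  intro h; exact absurd (h ▸ hi) hj

lemma W_orth (S : Finset (Fin n)) : (Wsub n S)ᗮ = Vsub n S := by
  ext v
  constructor
  · intro hv i hi
    have := hv (EuclideanSpace.single i 1) (single_mem_W hi)
    rwa [real_inner_comm, inner_eq, Finset.sum_eq_single i
      (fun j _ hj => by rw [EuclideanSpace.single_apply, if_neg hj, mul_zero])
      (fun h => absurd (Finset.mem_univ i) h),
      EuclideanSpace.single_apply, if_pos rfl, mul_one] at this
  · intro hv w hw
    rw [inner_eq]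
    apply Finset.sum_eq_zero
    intro i _
    by_cases hi : i ∈ S
    · rw [hw i hi, zero_mul]
    · rw [hv i hi, mul_zero]

lemma V_orth (S : Finset (Fin n)) : (Vsub n S)ᗮ = Wsub n S := by
  ext v
  constructor
  · intro hv i hi
    have := hv (EuclideanSpace.single i 1) (single_mem_V hi)
    rwa [real_inner_comm, inner_eq, Finset.sum_eq_single i
      (fun j _ hj => by rw [EuclideanSpace.single_apply, if_neg hj, mul_zero])
      (fun h => absurd (Finset.mem_univ i) h),
      EuclideanSpace.single_apply, if_pos rfl, mul_one] at this
  · intro hv w hw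
    rw [inner_eq]
    apply Finset.sum_eq_zero
    intro i _
    by_cases hi : i ∈ S
    · rw [hv i hi, mul_zero]
    · rw [hw i hi, zero_mul]

lemma core {n : ℕ} (L : Submodule ℝ (EuclideanSpace ℝ (Fin n))) (S : Finset (Fin n))
    (h : ∀ d ∈ L, (∀ i ∉ S, 0 ≤ d i) → d ≠ 0 → 0 < ∑ i, d i) :
    ∃ η ∈ Lᗮ, (∀ i ∈ S, η i = 1) ∧ (∀ i ∉ S, η i < 1) := by
  classical
  -- L ⊓ V = ⊥
  have hLV : L ⊓ Vsub n S = ⊥ := by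
    rw [Submodule.eq_bot_iff]
    intro d ⟨hdL, hdV⟩
    by_contra hd0
    have h1 := h d hdL (fun i hi => le_of_eq (hdV i hi).symm) hd0
    have h2 := h (-d) (neg_mem hdL)
      (fun i hi => by show (0:ℝ) ≤ -(d i); rw [hdV i hi]; simp) (by simpa using hd0)
    have h3 : ∑ i, (-d : EuclideanSpace ℝ (Fin n)) i = -∑ i, d i := by
      rw [← Finset.sum_neg_distrib]; rfl
    rw [h3] at h2; linarith
  -- Lᗮ ⊔ W = ⊤
  have h1 : (Lᗮ ⊔ Wsub n S)ᗮ = ⊥ := by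
    rw [← Submodule.inf_orthogonal, Submodule.orthogonal_orthogonal, W_orth]; exact hLV
  have hsup : Lᗮ ⊔ Wsub n S = ⊤ := by
    rw [← Submodule.orthogonal_orthogonal (Lᗮ ⊔ Wsub n S), h1,
      Submodule.bot_orthogonal_eq_top]
  -- get v₀ ∈ Lᗮ with v₀ = -1 on S
  set negInd : EuclideanSpace ℝ (Fin n) := WithLp.toLp 2 (fun i => if i ∈ S then (-1:ℝ) else 0)
    with hnegInd
  have hmem : negInd ∈ Lᗮ ⊔ Wsub n S := by rw [hsup]; exact Submodule.mem_top
  obtain ⟨v₀, hv₀L, w₁, hw₁, hsum⟩ := Submodule.mem_sup.mp hmem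
  have hv₀S : ∀ i ∈ S, v₀ i = -1 := by
    intro i hi
    have h3 : v₀ i + w₁ i = (if i ∈ S then (-1:ℝ) else 0) := congrArg (fun v => v i) hsum
    rw [hw₁ i hi, add_zero, if_pos hi] at h3
    exact h3
  set ones : EuclideanSpace ℝ (Fin n) := WithLp.toLp 2 (fun _ => 1) with hones
  set t₀ : EuclideanSpace ℝ (Fin n) := ones + v₀ with ht₀
  have ht₀S : ∀ i ∈ S, t₀ i = 0 := by
    intro i hi
    show ones i + v₀ i = 0
    rw [hv₀S i hi]; show (1:ℝ) + -1 = 0; ring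
  -- the sets
  set s : Set (EuclideanSpace ℝ (Fin n)) := {ζ | ∀ i ∉ S, 0 < ζ i} with hs_def
  set t : Set (EuclideanSpace ℝ (Fin n)) :=
    {ζ | (ζ - ones) ∈ Lᗮ ∧ ∀ i ∈ S, ζ i = 0} with ht_def
  have ht₀t : t₀ ∈ t := ⟨by simpa [ht₀] using hv₀L, ht₀S⟩
  have hs_eq : s = ⋂ i, ⋂ (_ : i ∉ S), (EuclideanSpace.proj (𝕜 := ℝ) i) ⁻¹' Set.Ioi 0 := by
    ext ζ; simp [hs_def, EuclideanSpace.proj]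
  have hs_open : IsOpen s := by
    rw [hs_eq]
    exact isOpen_iInter_of_finite fun i => isOpen_iInter_of_finite fun _ =>
      IsOpen.preimage (EuclideanSpace.proj i).continuous isOpen_Ioi
  have hs_conv : Convex ℝ s := by
    rw [hs_eq]
    exact convex_iInter fun i => convex_iInter fun _ =>
      (convex_Ioi (0:ℝ)).linear_preimage (EuclideanSpace.proj (𝕜 := ℝ) i).toLinearMap
  have ht_conv : Convex ℝ t := by
    intro ζ₁ h₁ ζ₂ h₂ a b ha hb hab
    constructor
    · have key : a • ζ₁ + b • ζ₂ - ones = a • (ζ₁ - ones) + b • (ζ₂ - ones) := by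
        ext i
        simp only [PiLp.add_apply, PiLp.sub_apply, PiLp.smul_apply, smul_eq_mul]
        show a * ζ₁ i + b * ζ₂ i - 1 = a * (ζ₁ i - 1) + b * (ζ₂ i - 1)
        linear_combination hab
      rw [key]
      exact Submodule.add_mem _ (Submodule.smul_mem _ _ h₁.1) (Submodule.smul_mem _ _ h₂.1)
    · intro i hi
      show a * ζ₁ i + b * ζ₂ i = 0
      rw [h₁.2 i hi, h₂.2 i hi]; ring
  by_cases hst : (s ∩ t).Nonempty
  · obtain ⟨ζ, hζs, hζt⟩ := hst
    refine ⟨ones - ζ, ?_, ?_, ?_⟩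
    · have := Submodule.neg_mem _ hζt.1
      simpa using this
    · intro i hi
      show ones i - ζ i = 1
      rw [hζt.2 i hi]; show (1:ℝ) - 0 = 1; ring
    · intro i hi
      have := hζs i hi
      show (1:ℝ) - ζ i < 1
      linarith
  · exfalso
    have hdisj : Disjoint s t := Set.disjoint_iff_inter_eq_empty.mpr
      (Set.not_nonempty_iff_eq_empty.mp hst)
    obtain ⟨f, u, hfs, hft⟩ := geometric_hahn_banach_open hs_conv hs_open ht_conv hdisj
    have hones_s : ones ∈ s := fun i _ => one_pos
    -- 0 ≤ u
    have hu0 : 0 ≤ u := by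
      by_contra hu
      push_neg at hu
      rcases le_or_gt 0 (f ones) with hf1 | hf1
      · have := hfs ones hones_s; linarith
      · have hε : (0:ℝ) < u / (2 * f ones) := by
          apply div_pos_of_neg_of_neg hu; linarith
        have hmem2 : (u / (2 * f ones)) • ones ∈ s := fun i _ => by
          show 0 < (u / (2 * f ones)) * 1
          simpa using hε
        have h5 := hfs _ hmem2
        rw [_root_.map_smul, smul_eq_mul] at h5
        have hne : f ones ≠ 0 := ne_of_lt hf1
        have hval : u / (2 * f ones) * f ones = u / 2 := by
          field_simp
        rw [hval] at h5
        linarith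
    -- f is nonpositive on vectors nonneg off S
    have hnonpos : ∀ x : EuclideanSpace ℝ (Fin n), (∀ j ∉ S, 0 ≤ x j) → f x ≤ 0 := by
      intro x hx
      by_contra hfx
      push_neg at hfx
      set c : ℝ := (|u - f ones| + 1) / f x with hc
      have hc0 : 0 < c := div_pos (by positivity) hfx
      have hmem2 : c • x + ones ∈ s := by
        intro j hj
        have h6 : (0:ℝ) ≤ c * x j := mul_nonneg hc0.le (hx j hj)
        show 0 < c * x j + 1
        linarith
      have h5 := hfs _ hmem2
      rw [_root_.map_add, _root_.map_smul, smul_eq_mul] at h5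
      rw [hc, div_mul_cancel₀ _ (ne_of_gt hfx)] at h5
      have h7 : |u - f ones| < u - f ones := by linarith
      exact absurd (le_abs_self (u - f ones)) (not_le.mpr h7)
    -- the representing vector
    set w : EuclideanSpace ℝ (Fin n) := (InnerProductSpace.toDual ℝ _).symm f with hwdef
    have hw : ∀ x : EuclideanSpace ℝ (Fin n), (inner ℝ w x : ℝ) = f x := fun x =>
      InnerProductSpace.toDual_symm_apply
    have hwi : ∀ i, w i = f (EuclideanSpace.single i 1) := by
      intro i
      rw [← hw]
      rw [inner_eq, Finset.sum_eq_single i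
        (fun j _ hj => by rw [EuclideanSpace.single_apply, if_neg hj, mul_zero])
        (fun hh => absurd (Finset.mem_univ i) hh),
        EuclideanSpace.single_apply, if_pos rfl, mul_one]
    have hwS : ∀ i ∈ S, w i = 0 := by
      intro i hi
      have hco : ∀ (c : ℝ) (j : Fin n), j ∉ S → (0:ℝ) ≤ (c • EuclideanSpace.single i (1:ℝ)) j := by
        intro c j hj
        have : j ≠ i := by rintro rfl; exact hj hi
        show (0:ℝ) ≤ c * EuclideanSpace.single i (1:ℝ) j
        rw [EuclideanSpace.single_apply, if_neg this, mul_zero]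
      have hp := hnonpos _ (hco 1)
      have hm := hnonpos _ (hco (-1))
      rw [_root_.map_smul, smul_eq_mul, one_mul] at hp
      rw [_root_.map_smul, smul_eq_mul, neg_one_mul, neg_nonpos] at hm
      rw [hwi i]; linarith
    have hwOff : ∀ i, i ∉ S → w i ≤ 0 := by
      intro i hi
      rw [hwi i]
      apply hnonpos
      intro j hj
      rw [EuclideanSpace.single_apply]
      split <;> norm_num
    -- f vanishes on directions of t
    have hdir : ∀ v, v ∈ Lᗮ ⊓ Wsub n S → f v = 0 := by
      intro v ⟨hvL, hvW⟩
      by_contra hfv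
      have hmemt : ∀ c : ℝ, t₀ + c • v ∈ t := by
        intro c
        constructor
        · have : t₀ + c • v - ones = v₀ + c • v := by
            rw [ht₀]; abel
          rw [this]
          exact Submodule.add_mem _ hv₀L (Submodule.smul_mem _ _ hvL)
        · intro i hi
          show t₀ i + c * v i = 0
          rw [ht₀S i hi, hvW i hi, mul_zero, add_zero]
      have h8 := hft _ (hmemt ((u - f t₀ - 1)/f v))
      rw [_root_.map_add, _root_.map_smul, smul_eq_mul, div_mul_cancel₀ _ hfv] at h8
      linarith
    have hwOrth : w ∈ (Lᗮ ⊓ Wsub n S)ᗮ := by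
      rw [Submodule.mem_orthogonal]
      intro v hv
      rw [real_inner_comm, hw]
      exact hdir v hv
    have hrw : (Lᗮ ⊓ Wsub n S)ᗮ = L ⊔ Vsub n S := by
      rw [← V_orth, Submodule.inf_orthogonal, Submodule.orthogonal_orthogonal]
    rw [hrw] at hwOrth
    obtain ⟨d, hdL, σ, hσV, hdσ⟩ := Submodule.mem_sup.mp hwOrth
    -- the vector -d violates h
    have hdOff : ∀ i, i ∉ S → d i ≤ 0 := by
      intro i hi
      have h9 : d i + σ i = w i := congrArg (fun v => v i) hdσ
      rw [hσV i hi, add_zero] at h9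
      rw [h9]; exact hwOff i hi
    have hd0 : d ≠ 0 := by
      intro hd
      have hw0 : w = 0 := by
        ext i
        have h9 : d i + σ i = w i := congrArg (fun v => v i) hdσ
        by_cases hi : i ∈ S
        · rw [hwS i hi]; rfl
        · rw [← h9, hσV i hi, hd]; show (0:ℝ) + 0 = 0; ring
      have hf0 : ∀ x, f x = 0 := by
        intro x; rw [← hw, hw0, inner_zero_left]
      have ha := hfs ones hones_s
      have hb := hft t₀ ht₀t
      rw [hf0 ones] at ha
      rw [hf0 t₀] at hb
      linarith
    have hpos := h (-d) (neg_mem hdL) (fun i hi => by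
        show (0:ℝ) ≤ -(d i); linarith [hdOff i hi])
      (by simpa using hd0)
    -- but ∑ (-d) ≤ 0
    have hinner : (inner ℝ w t₀ : ℝ) = ∑ i, d i := by
      rw [← hdσ, inner_eq]
      have : ∀ i, (d + σ : EuclideanSpace ℝ (Fin n)) i * t₀ i = d i * t₀ i + σ i * t₀ i := by
        intro i; show (d i + σ i) * t₀ i = _; ring
      rw [Finset.sum_congr rfl (fun i _ => this i), Finset.sum_add_distrib]
      have hσ0 : ∑ i, σ i * t₀ i = 0 := by
        apply Finset.sum_eq_zero
        intro i _
        by_cases hi : i ∈ S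
        · rw [ht₀S i hi, mul_zero]
        · rw [hσV i hi, zero_mul]
      rw [hσ0, add_zero]
      have hd2 : ∀ i, d i * t₀ i = d i * 1 + d i * v₀ i := by
        intro i; show d i * (ones i + v₀ i) = _; show d i * (1 + v₀ i) = _; ring
      rw [Finset.sum_congr rfl (fun i _ => hd2 i), Finset.sum_add_distrib]
      have hdv₀ : ∑ i, d i * v₀ i = 0 := by
        have := hv₀L d hdL
        rwa [inner_eq] at this
      rw [hdv₀, add_zero]
      simp
    have hft₀ : 0 ≤ f t₀ := le_trans hu0 (hft t₀ ht₀t)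
    rw [← hw, hinner] at hft₀
    have hsumneg : ∑ i, (-d : EuclideanSpace ℝ (Fin n)) i = -∑ i, d i := by
      rw [← Finset.sum_neg_distrib]; rfl
    rw [hsumneg] at hpos
    linarith

variable {m : ℕ}

/-- kernel of `mulVec A` as a submodule of Euclidean space -/
noncomputable def kerSub (m : ℕ) (A : Matrix (Fin m) (Fin n) ℝ) : Submodule ℝ (EuclideanSpace ℝ (Fin n)) :=
  LinearMap.ker (A.mulVecLin ∘ₗ (WithLp.linearEquiv 2 ℝ (Fin n → ℝ)).toLinearMap)

/-- range of `mulVec Aᵀ` as a submodule of Euclidean space -/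
noncomputable def rangeSub (m : ℕ) (A : Matrix (Fin m) (Fin n) ℝ) : Submodule ℝ (EuclideanSpace ℝ (Fin n)) :=
  LinearMap.range ((WithLp.linearEquiv 2 ℝ (Fin n → ℝ)).symm.toLinearMap ∘ₗ
    A.transpose.mulVecLin)

lemma mem_kerSub {A : Matrix (Fin m) (Fin n) ℝ} {d : EuclideanSpace ℝ (Fin n)} :
    d ∈ kerSub m A ↔ A.mulVec d = 0 := Iff.rfl

lemma mem_rangeSub {A : Matrix (Fin m) (Fin n) ℝ} {η : EuclideanSpace ℝ (Fin n)} :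
    η ∈ rangeSub m A ↔ ∃ u : Fin m → ℝ, A.transpose.mulVec u = η := by
  constructor
  · rintro ⟨u, hu⟩; exact ⟨u, by rw [← hu]; rfl⟩
  · rintro ⟨u, hu⟩; exact ⟨u, by rw [← WithLp.toLp_ofLp (p := 2) η, ← hu]; rfl⟩

lemma dot_eq {A : Matrix (Fin m) (Fin n) ℝ} (u : Fin m → ℝ) (v : Fin n → ℝ) :
    ∑ i, (A.transpose.mulVec u) i * v i = u ⬝ᵥ A.mulVec v := by
  have : ∑ i, (A.transpose.mulVec u) i * v i = (A.transpose.mulVec u) ⬝ᵥ v := rfl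
  rw [this, Matrix.mulVec_transpose, ← Matrix.dotProduct_mulVec]

lemma rangeSub_orth (A : Matrix (Fin m) (Fin n) ℝ) : (rangeSub m A)ᗮ = kerSub m A := by
  ext d
  rw [Submodule.mem_orthogonal, mem_kerSub]
  constructor
  · intro hd
    funext j
    have h1 := hd (WithLp.toLp 2 (A.transpose.mulVec (Pi.single j 1))) (mem_rangeSub.mpr ⟨Pi.single j 1, rfl⟩)
    rw [inner_eq, WithLp.ofLp_toLp, dot_eq, single_dotProduct, one_mul] at h1
    exact h1
  · intro hd y hy
    obtain ⟨u, hu⟩ := mem_rangeSub.mp hy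
    rw [inner_eq, ← hu, dot_eq, hd, dotProduct_zero]

lemma kerSub_orth (A : Matrix (Fin m) (Fin n) ℝ) : (kerSub m A)ᗮ = rangeSub m A := by
  rw [← rangeSub_orth, Submodule.orthogonal_orthogonal]

/-- `x` is the unique least ℓ1-norm nonnegative solution to the system `A z = y`. -/
def uniqueLeastL1 {m n : ℕ} (A : Matrix (Fin m) (Fin n) ℝ) (y : Fin m → ℝ)
    (x : Fin n → ℝ) : Prop :=
  A.mulVec x = y ∧ 0 ≤ x ∧
    ∀ z : Fin n → ℝ, A.mulVec z = y → 0 ≤ z → z ≠ x → ∑ i, |x i| < ∑ i, |z i|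

/-- `Aᵀ` satisfies the range space property of order `K`. -/
def RSPorder {m n : ℕ} (A : Matrix (Fin m) (Fin n) ℝ) (K : ℕ) : Prop :=
  ∀ S : Finset (Fin n), S.card ≤ K →
    ∃ η : Fin n → ℝ, (∃ u : Fin m → ℝ, A.transpose.mulVec u = η) ∧
      (∀ i ∈ S, η i = 1) ∧ (∀ i ∉ S, η i < 1)

lemma forward {m n K : ℕ} (A : Matrix (Fin m) (Fin n) ℝ)
    (hrec : ∀ x : Fin n → ℝ, 0 ≤ x → {i : Fin n | x i ≠ 0}.ncard ≤ K →
      uniqueLeastL1 A (A.mulVec x) x) : RSPorder A K := by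
  classical
  intro S hS
  set x : Fin n → ℝ := fun i => if i ∈ S then 1 else 0 with hxdef
  have hx0 : 0 ≤ x := by
    intro i
    show (0:ℝ) ≤ if i ∈ S then 1 else 0
    split <;> norm_num
  have hsupp : {i : Fin n | x i ≠ 0} = ↑S := by
    ext i
    simp [hxdef]
  have hcard : {i : Fin n | x i ≠ 0}.ncard ≤ K := by
    rw [hsupp, Set.ncard_coe_finset]; exact hS
  obtain ⟨-, -, hmin⟩ := hrec x hx0 hcard
  have hkey : ∀ d ∈ kerSub m A, (∀ i ∉ S, 0 ≤ d i) → d ≠ 0 → 0 < ∑ i, d i := by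
    intro d hd hdnn hd0
    have hAd : A.mulVec d = 0 := mem_kerSub.mp hd
    set M : ℝ := ∑ i, |d i| with hM
    have hM0 : 0 ≤ M := Finset.sum_nonneg fun i _ => abs_nonneg _
    set ε : ℝ := (1 + M)⁻¹ with hε
    have hε0 : 0 < ε := by positivity
    have hbound : ∀ i, ε * |d i| < 1 := by
      intro i
      have h1 : |d i| ≤ M := Finset.single_le_sum (f := fun i => |d i|)
        (fun i _ => abs_nonneg _) (Finset.mem_univ i)
      have h2 : ε * |d i| ≤ ε * M := by
        apply mul_le_mul_of_nonneg_left h1 hε0.le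
      have h3 : ε * M < 1 := by
        rw [hε, inv_mul_eq_div, div_lt_one (by linarith)]
        linarith
      linarith
    set z : Fin n → ℝ := fun i => x i + ε * d i with hzdef
    have hzx : z = x + ε • (fun i => d i) := by funext i; rfl
    have hAz : A.mulVec z = A.mulVec x := by
      rw [hzx, Matrix.mulVec_add, Matrix.mulVec_smul]
      have : A.mulVec (fun i => d i) = 0 := hAd
      rw [this]
      simp
    have hz0 : 0 ≤ z := by
      intro i
      show (0:ℝ) ≤ x i + ε * d i
      by_cases hi : i ∈ S
      · have hx1 : x i = 1 := by rw [hxdef]; exact if_pos hi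
        have := hbound i
        have habs : -( ε * |d i|) ≤ ε * d i := by
          have h4 : -|d i| ≤ d i := neg_abs_le _
          nlinarith [hε0.le]
        rw [hx1]; linarith
      · have hx1 : x i = 0 := by rw [hxdef]; exact if_neg hi
        have := mul_nonneg hε0.le (hdnn i hi)
        rw [hx1]; linarith
    have hzx' : z ≠ x := by
      intro hzz
      apply hd0
      ext i
      have := congrFun hzz i
      show d i = 0
      have : x i + ε * d i = x i := this
      have hdi : ε * d i = 0 := by linarith
      rcases mul_eq_zero.mp hdi with h | h
      · exact absurd h (ne_of_gt hε0)
      · exact h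
    have := hmin z hAz hz0 hzx'
    have habs_x : ∀ i, |x i| = x i := fun i => abs_of_nonneg (hx0 i)
    have habs_z : ∀ i, |z i| = z i := fun i => abs_of_nonneg (hz0 i)
    rw [Finset.sum_congr rfl (fun i _ => habs_x i),
      Finset.sum_congr rfl (fun i _ => habs_z i)] at this
    have hsz : ∑ i, z i = ∑ i, x i + ε * ∑ i, d i := by
      rw [hzdef]
      rw [Finset.sum_add_distrib, ← Finset.mul_sum]
    rw [hsz] at this
    nlinarith [hε0]
  obtain ⟨η, hηmem, hη1, hηlt⟩ := core (kerSub m A) S hkey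
  rw [kerSub_orth] at hηmem
  obtain ⟨u, hu⟩ := mem_rangeSub.mp hηmem
  exact ⟨η, ⟨u, hu⟩, hη1, hηlt⟩

lemma backward {m n K : ℕ} (A : Matrix (Fin m) (Fin n) ℝ) (hrsp : RSPorder A K) :
    ∀ x : Fin n → ℝ, 0 ≤ x → {i : Fin n | x i ≠ 0}.ncard ≤ K →
      uniqueLeastL1 A (A.mulVec x) x := by
  classical
  intro x hx hcard
  refine ⟨rfl, hx, ?_⟩
  intro z hz hz0 hzx
  have hx' : ∀ i, 0 ≤ x i := fun i => by simpa using hx i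
  have hz0' : ∀ i, 0 ≤ z i := fun i => by simpa using hz0 i
  set S : Finset (Fin n) := Finset.univ.filter (fun i => x i ≠ 0) with hSdef
  have hSeq : {i : Fin n | x i ≠ 0} = ↑S := by ext i; simp [hSdef]
  have hScard : S.card ≤ K := by
    rw [hSeq, Set.ncard_coe_finset] at hcard; exact hcard
  have hxS : ∀ i, i ∉ S → x i = 0 := by
    intro i hi
    by_contra hxi
    exact hi (Finset.mem_filter.mpr ⟨Finset.mem_univ i, hxi⟩)
  -- general duality identity
  have hkey : ∀ (u : Fin m → ℝ) (v : Fin n → ℝ), A.mulVec v = A.mulVec x →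
      ∑ i, (A.transpose.mulVec u) i * v i = ∑ i, (A.transpose.mulVec u) i * x i := by
    intro u v hv
    rw [dot_eq, dot_eq, hv]
  obtain ⟨η, ⟨u, hu⟩, hη1, hηlt⟩ := hrsp S hScard
  have hηle : ∀ i, η i ≤ 1 := by
    intro i
    by_cases hi : i ∈ S
    · exact le_of_eq (hη1 i hi)
    · exact le_of_lt (hηlt i hi)
  have hηx : ∑ i, η i * x i = ∑ i, x i := by
    apply Finset.sum_congr rfl
    intro i _
    by_cases hi : i ∈ S
    · rw [hη1 i hi, one_mul]
    · rw [hxS i hi, mul_zero]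
  have habs_x : ∑ i, |x i| = ∑ i, x i :=
    Finset.sum_congr rfl fun i _ => abs_of_nonneg (hx' i)
  have habs_z : ∑ i, |z i| = ∑ i, z i :=
    Finset.sum_congr rfl fun i _ => abs_of_nonneg (hz0' i)
  rw [habs_x, habs_z]
  have hηxz : ∑ i, η i * z i = ∑ i, x i := by
    have := hkey u z hz
    rw [hu] at this
    rw [this, hηx]
  by_cases hcase : ∀ i, i ∉ S → z i = 0
  · -- z is supported on S : derive a contradiction
    exfalso
    have hzz : ∑ i, z i = ∑ i, x i := by
      rw [← hηxz]
      apply Finset.sum_congr rfl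
      intro i _
      by_cases hi : i ∈ S
      · rw [hη1 i hi, one_mul]
      · rw [hcase i hi, mul_zero]
    -- find a coordinate where z < x
    have hlt : ∃ j, z j < x j := by
      by_contra hno
      push_neg at hno
      apply hzx
      funext i
      have hsum0 : ∑ i, (z i - x i) = 0 := by
        rw [Finset.sum_sub_distrib, hzz, sub_self]
      have := (Finset.sum_eq_zero_iff_of_nonneg
        (fun i _ => sub_nonneg.mpr (hno i))).mp hsum0 i (Finset.mem_univ i)
      linarith
    obtain ⟨j₀, hj₀lt⟩ := hlt
    have hj₀pos : 0 < x j₀ := lt_of_le_of_lt (hz0' j₀) hj₀lt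
    set t : ℝ := x j₀ / (x j₀ - z j₀) with htdef
    set w : Fin n → ℝ := fun i => x i + t * (z i - x i) with hwdef
    have hwj₀ : w j₀ = 0 := by
      show x j₀ + t * (z j₀ - x j₀) = 0
      have hden : x j₀ - z j₀ ≠ 0 := ne_of_gt (by linarith)
      rw [htdef]
      field_simp
      ring
    have hAw : A.mulVec w = A.mulVec x := by
      have hww : w = x + t • (z - x) := by funext i; simp [hwdef]
      rw [hww, Matrix.mulVec_add, Matrix.mulVec_smul, Matrix.mulVec_sub, hz]
      simp
    have hwsum : ∑ i, w i = ∑ i, x i := by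
      rw [hwdef]
      rw [Finset.sum_add_distrib, ← Finset.mul_sum, Finset.sum_sub_distrib, hzz,
        sub_self, mul_zero, add_zero]
    set S' : Finset (Fin n) := Finset.univ.filter (fun i => w i ≠ 0) with hS'def
    have hS'sub : S' ⊆ S := by
      intro i hi
      rcases Finset.mem_filter.mp hi with ⟨-, hwi⟩
      by_contra hiS
      apply hwi
      show x i + t * (z i - x i) = 0
      rw [hxS i hiS, hcase i hiS]
      ring
    have hS'card : S'.card ≤ K := le_trans (Finset.card_le_card hS'sub) hScard
    obtain ⟨η', ⟨u', hu'⟩, hη'1, hη'lt⟩ := hrsp S' hS'card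
    have hη'le : ∀ i, η' i ≤ 1 := by
      intro i
      by_cases hi : i ∈ S'
      · exact le_of_eq (hη'1 i hi)
      · exact le_of_lt (hη'lt i hi)
    have hw_off : ∀ i, i ∉ S' → w i = 0 := by
      intro i hi
      by_contra hwi
      exact hi (Finset.mem_filter.mpr ⟨Finset.mem_univ i, hwi⟩)
    have hident : ∑ i, η' i * w i = ∑ i, η' i * x i := by
      have := hkey u' w hAw
      rw [hu'] at this
      exact this
    have hLHS : ∑ i, η' i * w i = ∑ i, x i := by
      rw [← hwsum]
      apply Finset.sum_congr rfl
      intro i _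
      by_cases hi : i ∈ S'
      · rw [hη'1 i hi, one_mul]
      · rw [hw_off i hi, mul_zero]
    have hj₀S' : j₀ ∉ S' := by
      intro hj
      exact (Finset.mem_filter.mp hj).2 hwj₀
    have hRHS : ∑ i, η' i * x i < ∑ i, x i := by
      apply Finset.sum_lt_sum
      · intro i _
        nlinarith [hη'le i, hx' i]
      · exact ⟨j₀, Finset.mem_univ j₀, by nlinarith [hη'lt j₀ hj₀S', hj₀pos]⟩
    linarith
  · -- z has mass off S : strict inequality directly
    push_neg at hcase
    obtain ⟨j, hjS, hjz⟩ := hcase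
    have hjpos : 0 < z j := lt_of_le_of_ne (hz0' j) (Ne.symm hjz)
    rw [← hηxz]
    apply Finset.sum_lt_sum
    · intro i _
      nlinarith [hηle i, hz0' i]
    · exact ⟨j, Finset.mem_univ j, by nlinarith [hηlt j hjS, hjpos]⟩

theorem stmt_14 {m n : ℕ} (hmn : m < n) (A : Matrix (Fin m) (Fin n) ℝ) (K : ℕ) :
    (∀ x : Fin n → ℝ, 0 ≤ x → {i : Fin n | x i ≠ 0}.ncard ≤ K →
      uniqueLeastL1 A (A.mulVec x) x) ↔ RSPorder A K := by
  constructor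
  · exact fun h => forward A h
  · exact fun h => backward A h
end

section
/- Let A be a real m×n matrix with m < n, and suppose there exists a subset S ⊆ {1,…,n} with |S| = K such that the column submatrix A_S has full column rank. Then Aᵀ has the weak range space property (WRSP) of order K if and only if every x ∈ ℝ^n with x ≥ 0, ‖x‖₀ ≤ K, and A_{J₊} of full column rank (where J₊ = {i : xᵢ > 0}) is the unique least ℓ1-norm nonnegative solution to the system Az = Ax. -/
open Finset

section Cone

variable {ι : Type*} [Fintype ι] [DecidableEq ι]
variable {E : Type*} [NormedAddCommGroup E] [InnerProductSpace ℝ E] [FiniteDimensional ℝ E]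

/-- conic Carathéodory -/
lemma cone_caratheodory (v : ι → E) :
    ∀ N (c : ι → ℝ), (∀ i, 0 ≤ c i) → (univ.filter (fun i => c i ≠ 0)).card ≤ N →
    ∃ d : ι → ℝ, (∀ i, 0 ≤ d i) ∧ (∑ i, d i • v i = ∑ i, c i • v i) ∧
      LinearIndependent ℝ (fun i : {i : ι // d i ≠ 0} => v i.1) := by
  intro N
  induction N with
  | zero =>
    intro c hc hcard
    have hzero : ∀ i, c i = 0 := by
      intro i
      by_contra h
      have : i ∈ univ.filter (fun i => c i ≠ 0) := by simp [h]
      have := card_pos.mpr ⟨i, this⟩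
      omega
    refine ⟨c, hc, rfl, ?_⟩
    have : IsEmpty {i : ι // c i ≠ 0} := ⟨fun ⟨i, hi⟩ => hi (hzero i)⟩
    exact linearIndependent_empty_type
  | succ N ih =>
    intro c hc hcard
    by_cases hLI : LinearIndependent ℝ (fun i : {i : ι // c i ≠ 0} => v i.1)
    · exact ⟨c, hc, rfl, hLI⟩
    · -- get a nontrivial relation supported in the support of c
      obtain ⟨g, hg0, i₁, hgi₁⟩ := Fintype.not_linearIndependent_iff.mp hLI
      have key : ∀ lam : ι → ℝ, (∑ i, lam i • v i = 0) → (∀ i, lam i ≠ 0 → c i ≠ 0) →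
          (∃ i, 0 < lam i) →
          ∃ d : ι → ℝ, (∀ i, 0 ≤ d i) ∧ (∑ i, d i • v i = ∑ i, c i • v i) ∧
            LinearIndependent ℝ (fun i : {i : ι // d i ≠ 0} => v i.1) := by
        rintro lam hlamsum hsupp ⟨i₂, hi₂⟩
        set P : Finset ι := univ.filter (fun i => 0 < lam i) with hP
        have hPne : P.Nonempty := ⟨i₂, by simp [hP, hi₂]⟩
        obtain ⟨i₀, hi₀P, hi₀min⟩ := P.exists_min_image (fun i => c i / lam i) hPne
        have hlami₀ : 0 < lam i₀ := by simpa [hP] using hi₀P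
        set t : ℝ := c i₀ / lam i₀ with ht
        have ht0 : 0 ≤ t := div_nonneg (hc i₀) hlami₀.le
        set d : ι → ℝ := fun i => c i - t * lam i with hd
        have hd0 : ∀ i, 0 ≤ d i := by
          intro i
          rcases le_or_gt (lam i) 0 with h | h
          · have : t * lam i ≤ 0 := mul_nonpos_of_nonneg_of_nonpos ht0 h
            simp only [hd]; linarith [hc i]
          · have h2 : t ≤ c i / lam i := hi₀min i (by simp [hP, h])
            have := (le_div_iff₀ h).mp h2
            simp only [hd]; linarith
        have hdsum : ∑ i, d i • v i = ∑ i, c i • v i := by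
          simp only [hd, sub_smul, mul_smul, Finset.sum_sub_distrib, ← Finset.smul_sum,
            hlamsum, smul_zero, sub_zero]
        have hdsupp : ∀ i, d i ≠ 0 → c i ≠ 0 := by
          intro i hi
          by_contra h
          have hl : lam i = 0 := by
            by_contra hl; exact (hsupp i hl) h
          simp [hd, h, hl] at hi
        have hdi₀ : d i₀ = 0 := by
          simp only [hd, ht]
          field_simp
          ring
        have hcard' : (univ.filter (fun i => d i ≠ 0)).card ≤ N := by
          have hsub : univ.filter (fun i => d i ≠ 0) ⊆
              (univ.filter (fun i => c i ≠ 0)).erase i₀ := by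
            intro i hi
            simp only [mem_filter, mem_univ, true_and] at hi
            refine Finset.mem_erase.mpr ⟨?_, by simp [hdsupp i hi]⟩
            rintro rfl; exact hi hdi₀
          have h1 := Finset.card_le_card hsub
          have h2 : i₀ ∈ univ.filter (fun i => c i ≠ 0) := by
            simp [hsupp i₀ hlami₀.ne']
          have := Finset.card_erase_of_mem h2
          omega
        obtain ⟨e, he0, hesum, heLI⟩ := ih d hd0 hcard'
        exact ⟨e, he0, hesum.trans hdsum, heLI⟩
      set lam : ι → ℝ := fun i => if h : c i ≠ 0 then g ⟨i, h⟩ else 0 with hlam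
      have hlamsum : ∑ i, lam i • v i = 0 := by
        rw [← hg0]
        have e1 : ∑ i, lam i • v i = ∑ i ∈ univ.filter (fun i => c i ≠ 0), lam i • v i := by
          refine (Finset.sum_subset (Finset.subset_univ _) ?_).symm
          intro i _ hi
          have : c i = 0 := by by_contra h; exact hi (by simp [h])
          simp [hlam, this]
        rw [e1, Finset.sum_subtype (p := fun i => c i ≠ 0) (univ.filter (fun i => c i ≠ 0))
          (by simp) (fun i => lam i • v i)]
        refine Finset.sum_congr rfl ?_
        rintro ⟨i, hi⟩ _
        simp only [hlam, dif_pos hi]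
      have hsupp : ∀ i, lam i ≠ 0 → c i ≠ 0 := by
        intro i hi
        by_contra h
        simp [hlam, h] at hi
      have hlami₁ : lam i₁.1 ≠ 0 := by
        simp only [hlam, dif_pos i₁.2]
        exact hgi₁
      rcases lt_or_gt_of_ne hlami₁ with h | h
      · refine key (fun i => -lam i)
          (by simp only [neg_smul, Finset.sum_neg_distrib, hlamsum, neg_zero])
          (fun i hi => hsupp i (by simpa using hi)) ⟨i₁, by simpa using h⟩
      · exact key lam hlamsum hsupp ⟨i₁, h⟩

open scoped InnerProductSpace in
lemma isClosed_cone_of_li (v : ι → E) (hv : LinearIndependent ℝ v) :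
    IsClosed {y : E | ∃ c : ι → ℝ, (∀ i, 0 ≤ c i) ∧ ∑ i, c i • v i = y} := by
  classical
  let L : (ι → ℝ) →ₗ[ℝ] E :=
    { toFun := fun c => ∑ i, c i • v i
      map_add' := by intro a b; simp [add_smul, Finset.sum_add_distrib]
      map_smul' := by intro r a; simp [smul_smul, Finset.smul_sum] }
  have hker : LinearMap.ker L = ⊥ := by
    rw [LinearMap.ker_eq_bot']
    intro c hc
    have := Fintype.linearIndependent_iff.mp hv c hc
    funext i; exact this i
  have hclosed : IsClosed {c : ι → ℝ | ∀ i, 0 ≤ c i} := by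
    have : {c : ι → ℝ | ∀ i, 0 ≤ c i} = ⋂ i, {c : ι → ℝ | 0 ≤ c i} := by
      ext c; simp
    rw [this]
    exact isClosed_iInter fun i => isClosed_le continuous_const (continuous_apply i)
  have himg : {y : E | ∃ c : ι → ℝ, (∀ i, 0 ≤ c i) ∧ ∑ i, c i • v i = y}
      = L '' {c : ι → ℝ | ∀ i, 0 ≤ c i} := by
    ext y
    constructor
    · rintro ⟨c, hc, rfl⟩; exact ⟨c, hc, rfl⟩
    · rintro ⟨c, hc, rfl⟩; exact ⟨c, hc, rfl⟩
  rw [himg]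
  exact (LinearMap.isClosedEmbedding_of_injective hker).isClosedMap _ hclosed

lemma isClosed_coneSet (v : ι → E) :
    IsClosed {y : E | ∃ c : ι → ℝ, (∀ i, 0 ≤ c i) ∧ ∑ i, c i • v i = y} := by
  classical
  have hU : {y : E | ∃ c : ι → ℝ, (∀ i, 0 ≤ c i) ∧ ∑ i, c i • v i = y}
      = ⋃ (T : Finset ι) (_ : LinearIndependent ℝ (fun i : {x : ι // x ∈ T} => v i.1)),
        {y : E | ∃ c : {x : ι // x ∈ T} → ℝ, (∀ i, 0 ≤ c i) ∧ ∑ i, c i • v i.1 = y} := by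
    ext y
    simp only [Set.mem_iUnion, Set.mem_setOf_eq]
    constructor
    · rintro ⟨c, hc, rfl⟩
      obtain ⟨d, hd0, hdsum, hdLI⟩ := cone_caratheodory v (univ.filter (fun i => c i ≠ 0)).card
        c hc le_rfl
      refine ⟨univ.filter (fun i => d i ≠ 0), ?_, fun i => d i.1, fun i => hd0 i.1, ?_⟩
      · refine (linearIndependent_equiv'
          (Equiv.subtypeEquivRight (q := fun i => d i ≠ 0)
            (p := fun i : ι => i ∈ univ.filter (fun i => d i ≠ 0)) (by simp))
          (f := fun i : {i : ι // d i ≠ 0} => v i.1) ?_).mpr hdLI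
        funext x
        simp [Equiv.subtypeEquivRight]; rfl
      · rw [← hdsum]
        have e1 : ∑ i : ι, d i • v i = ∑ i ∈ univ.filter (fun i => d i ≠ 0), d i • v i := by
          refine (Finset.sum_subset (Finset.subset_univ _) ?_).symm
          intro i _ hi
          have : d i = 0 := by by_contra h; exact hi (by simp [h])
          simp [this]
        rw [e1, Finset.sum_subtype (p := fun i => i ∈ univ.filter (fun i => d i ≠ 0))
          (univ.filter (fun i => d i ≠ 0)) (fun x => Iff.rfl) (fun i => d i • v i)]
    · rintro ⟨T, hT, c, hc, rfl⟩
      refine ⟨fun i => if h : i ∈ T then c ⟨i, h⟩ else 0, fun i => ?_, ?_⟩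
      · by_cases h : i ∈ T <;> simp [h, hc]
      · rw [← Finset.sum_subset (Finset.subset_univ T) (by intro i _ hi; simp [hi])]
        rw [Finset.sum_subtype (p := fun i => i ∈ T) T (fun x => Iff.rfl)]
        refine Finset.sum_congr rfl fun i _ => by simp [i.2]
  rw [hU]
  refine isClosed_iUnion_of_finite fun T => ?_
  by_cases hT : LinearIndependent ℝ (fun i : {x : ι // x ∈ T} => v i.1)
  · simpa [hT] using isClosed_cone_of_li _ hT
  · simp [hT]

open scoped InnerProductSpace in
lemma farkas_cone [CompleteSpace E] (v : ι → E) (p : E)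
    (h : ¬ ∃ c : ι → ℝ, (∀ i, 0 ≤ c i) ∧ ∑ i, c i • v i = p) :
    ∃ φ : E, (∀ i, ⟪v i, φ⟫_ℝ ≤ 0) ∧ 0 < ⟪p, φ⟫_ℝ := by
  classical
  set K : ConvexCone ℝ E :=
    { carrier := {y : E | ∃ c : ι → ℝ, (∀ i, 0 ≤ c i) ∧ ∑ i, c i • v i = y}
      smul_mem' := by
        rintro r hr y ⟨c, hc, rfl⟩
        exact ⟨fun i => r * c i, fun i => mul_nonneg hr.le (hc i), by
          simp [mul_smul, Finset.smul_sum]⟩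
      add_mem' := by
        rintro y ⟨c, hc, rfl⟩ y' ⟨c', hc', rfl⟩
        exact ⟨fun i => c i + c' i, fun i => add_nonneg (hc i) (hc' i), by
          simp [add_smul, Finset.sum_add_distrib]⟩ } with hK
  have hne : (K : Set E).Nonempty := ⟨0, 0, fun i => le_rfl, by simp⟩
  have hcl : IsClosed (K : Set E) := isClosed_coneSet v
  have hpK : p ∉ K := h
  obtain ⟨y, hy1, hy2⟩ := ProperCone.hyperplane_separation'
    ⟨K.toPointedCone (.of_nonempty_of_isClosed hne hcl), hcl⟩ hpK
  refine ⟨-y, fun i => ?_, ?_⟩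
  · have hvi : v i ∈ K := ⟨Pi.single i 1, fun j => by
      by_cases hj : j = i <;> simp [Pi.single_apply, hj], by
      simp [Pi.single_apply, Finset.sum_ite_eq']⟩
    have := hy1 (v i) hvi
    rw [inner_neg_right]
    linarith
  · rw [inner_neg_right, real_inner_comm]
    linarith [real_inner_comm p y]

end Cone


section Euc
open scoped InnerProductSpace
variable {m : ℕ}

noncomputable def emb (a : Fin m → ℝ) (t : ℝ) : EuclideanSpace ℝ (Fin m ⊕ Unit) :=
  WithLp.toLp 2 (Sum.elim a (fun _ => t))

@[simp] lemma emb_apply_inl (a : Fin m → ℝ) (t : ℝ) (k : Fin m) :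
    emb a t (Sum.inl k) = a k := rfl

@[simp] lemma emb_apply_inr (a : Fin m → ℝ) (t : ℝ) (u : Unit) :
    emb a t (Sum.inr u) = t := rfl

lemma euc_sum_apply {ι : Type*} [Fintype ι] (f : ι → EuclideanSpace ℝ (Fin m ⊕ Unit))
    (κ : Fin m ⊕ Unit) : (∑ i, f i) κ = ∑ i, f i κ :=
  by rw [WithLp.ofLp_sum]; exact Finset.sum_apply κ Finset.univ _

lemma euc_smul_apply (c : ℝ) (x : EuclideanSpace ℝ (Fin m ⊕ Unit)) (κ : Fin m ⊕ Unit) :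
    (c • x) κ = c * x κ := rfl

lemma euc_inner_emb (a : Fin m → ℝ) (t : ℝ) (φ : EuclideanSpace ℝ (Fin m ⊕ Unit)) :
    ⟪emb a t, φ⟫_ℝ = ∑ k, a k * φ (Sum.inl k) + t * φ (Sum.inr ()) := by
  simp [PiLp.inner_apply, RCLike.inner_apply, conj_trivial, Fintype.sum_sum_type, mul_comm]

end Euc


open Matrix
open scoped InnerProductSpace

/-- The column submatrix `A_S` has full column rank. -/
def fullColRank {m n : ℕ} (A : Matrix (Fin m) (Fin n) ℝ) (S : Finset (Fin n)) : Prop :=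
  LinearIndependent ℝ (fun j : {i : Fin n // i ∈ S} => fun k : Fin m => A k j.1)

/-- `Aᵀ` has the weak range space property (WRSP) of order `K`. -/
def WRSPorder {m n : ℕ} (A : Matrix (Fin m) (Fin n) ℝ) (K : ℕ) : Prop :=
  (∃ S : Finset (Fin n), S.card = K ∧ fullColRank A S) ∧
  (∀ S : Finset (Fin n), S.card ≤ K → fullColRank A S →
    ∃ η : Fin n → ℝ, (∃ u : Fin m → ℝ, A.transpose.mulVec u = η) ∧
      (∀ i ∈ S, η i = 1) ∧ (∀ i ∉ S, η i < 1))

section helpers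

variable {m n : ℕ} (A : Matrix (Fin m) (Fin n) ℝ)

lemma mulVec_eq_sum (v : Fin n → ℝ) (k : Fin m) :
    A.mulVec v k = ∑ i, A k i * v i := by
  simp [Matrix.mulVec, dotProduct]

lemma transpose_mulVec_eq_sum (u : Fin m → ℝ) (i : Fin n) :
    A.transpose.mulVec u i = ∑ k, A k i * u k := by
  simp [Matrix.mulVec, dotProduct, Matrix.transpose_apply]

lemma dot_swap (u : Fin m → ℝ) (z : Fin n → ℝ) :
    ∑ i, (∑ k, A k i * u k) * z i = ∑ k, u k * A.mulVec z k := by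
  simp only [mulVec_eq_sum, Finset.sum_mul, Finset.mul_sum]
  rw [Finset.sum_comm]
  refine Finset.sum_congr rfl fun k _ => Finset.sum_congr rfl fun i _ => by ring

lemma fullColRank_unique {S : Finset (Fin n)} (h : fullColRank A S) {v : Fin n → ℝ}
    (hsupp : ∀ i ∉ S, v i = 0) (hv : A.mulVec v = 0) : v = 0 := by
  have hLI := Fintype.linearIndependent_iff.mp h (fun j => v j.1) ?_
  · funext i
    by_cases hi : i ∈ S
    · exact hLI ⟨i, hi⟩
    · exact hsupp i hi
  · funext k
    have h2 : (∑ j : {i : Fin n // i ∈ S}, v j.1 • fun k : Fin m => A k j.1) k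
        = ∑ j : {i : Fin n // i ∈ S}, v j.1 * A k j.1 := by
      simp [Finset.sum_apply]
    rw [h2]
    have h3 : ∑ j : {i : Fin n // i ∈ S}, v j.1 * A k j.1 = ∑ i ∈ S, v i * A k i :=
      Finset.sum_coe_sort S (fun i => v i * A k i)
    have h5 : ∑ i ∈ S, v i * A k i = ∑ i : Fin n, v i * A k i :=
      Finset.sum_subset (Finset.subset_univ S) (fun i _ hi => by simp [hsupp i hi])
    have h4 := congrFun hv k
    rw [mulVec_eq_sum] at h4
    simp only [Pi.zero_apply] at h4
    rw [h3, h5]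
    exact (Finset.sum_congr rfl fun i _ => mul_comm (v i) (A k i)).trans h4

lemma li_transfer {p q : Fin n → Prop} (hpq : ∀ i, p i ↔ q i)
    (h : LinearIndependent ℝ (fun j : {i : Fin n // p i} => fun k : Fin m => A k j.1)) :
    LinearIndependent ℝ (fun j : {i : Fin n // q i} => fun k : Fin m => A k j.1) := by
  refine (linearIndependent_equiv' (Equiv.subtypeEquivRight hpq)
    (f := fun j : {i : Fin n // q i} => fun k : Fin m => A k j.1) ?_).mp h
  funext j
  simp [Equiv.subtypeEquivRight]; rfl

end helpers

set_option maxHeartbeats 2000000 in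
theorem stmt_16 {m n : ℕ} (hmn : m < n) (A : Matrix (Fin m) (Fin n) ℝ) (K : ℕ)
    (hex : ∃ S : Finset (Fin n), S.card = K ∧ fullColRank A S) :
    WRSPorder A K ↔
      ∀ x : Fin n → ℝ, 0 ≤ x → {i : Fin n | x i ≠ 0}.ncard ≤ K →
        LinearIndependent ℝ (fun j : {i : Fin n // 0 < x i} =>
          fun k : Fin m => A k j.1) →
        uniqueLeastL1 A (A.mulVec x) x := by
  classical
  constructor
  · -- forward direction
    rintro ⟨-, hW⟩ x hx0 hxcard hxLI
    set S : Finset (Fin n) := Finset.univ.filter (fun i => 0 < x i) with hS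
    have hmemS : ∀ i, i ∈ S ↔ 0 < x i := by intro i; simp [hS]
    have hne_iff : ∀ i, x i ≠ 0 ↔ 0 < x i := fun i => ⟨fun h => lt_of_le_of_ne (hx0 i) (Ne.symm h),
      fun h => ne_of_gt h⟩
    have hScard : S.card ≤ K := by
      have hset : {i : Fin n | x i ≠ 0} = (S : Set (Fin n)) := by
        ext i; simp [hmemS, hne_iff i]
      rw [hset, Set.ncard_coe_finset] at hxcard
      exact hxcard
    have hSrank : fullColRank A S := li_transfer A (fun i => (hmemS i).symm)
      (by exact li_transfer A (fun i => Iff.rfl) hxLI)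
    obtain ⟨η, ⟨u, hu⟩, hη1, hηlt⟩ := hW S hScard hSrank
    have hηval : ∀ i, η i = ∑ k, A k i * u k := by
      intro i; rw [← hu, transpose_mulVec_eq_sum]
    have hηle : ∀ i, η i ≤ 1 := by
      intro i
      by_cases hi : i ∈ S
      · exact le_of_eq (hη1 i hi)
      · exact (hηlt i hi).le
    refine ⟨rfl, hx0, ?_⟩
    intro z hz hz0 hzx
    -- find index outside S with z positive
    have hzi : ∃ i, i ∉ S ∧ 0 < z i := by
      by_contra hcon
      push_neg at hcon
      have hvz : z - x = 0 := by
        refine fullColRank_unique A hSrank (fun i hi => ?_) ?_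
        · have h1 : z i = 0 := le_antisymm (hcon i hi) (hz0 i)
          have h2 : x i = 0 := by
            by_contra h
            exact hi ((hmemS i).mpr ((hne_iff i).mp h))
          simp [Pi.sub_apply, h1, h2]
        · rw [Matrix.mulVec_sub, hz, sub_self]
      exact hzx (by funext i; have := congrFun hvz i; simpa [sub_eq_zero] using this)
    obtain ⟨i₀, hi₀S, hi₀z⟩ := hzi
    have key1 : ∑ i, x i = ∑ i, η i * x i := by
      refine Finset.sum_congr rfl fun i _ => ?_
      by_cases hxi : x i = 0
      · simp [hxi]
      · rw [hη1 i ((hmemS i).mpr ((hne_iff i).mp hxi)), one_mul]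
    have key2 : ∑ i, η i * x i = ∑ i, η i * z i := by
      have e1 : ∑ i, η i * x i = ∑ k, u k * A.mulVec x k := by
        simp only [hηval]; exact dot_swap A u x
      have e2 : ∑ i, η i * z i = ∑ k, u k * A.mulVec z k := by
        simp only [hηval]; exact dot_swap A u z
      rw [e1, e2, hz]
    have key3 : ∑ i, η i * z i < ∑ i, z i := by
      refine Finset.sum_lt_sum (fun i _ => ?_) ⟨i₀, Finset.mem_univ i₀, ?_⟩
      · nlinarith [mul_nonneg (sub_nonneg.mpr (hηle i)) (hz0 i)]
      · nlinarith [mul_pos (sub_pos.mpr (hηlt i₀ hi₀S)) hi₀z]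
    calc ∑ i, |x i| = ∑ i, x i := Finset.sum_congr rfl fun i _ => abs_of_nonneg (hx0 i)
      _ = ∑ i, η i * x i := key1
      _ = ∑ i, η i * z i := key2
      _ < ∑ i, z i := key3
      _ = ∑ i, |z i| := (Finset.sum_congr rfl fun i _ => (abs_of_nonneg (hz0 i))).symm
  · -- reverse direction
    intro hcond
    refine ⟨hex, ?_⟩
    intro S hSK hSrank
    -- K ≤ m, so the complement of S is nonempty
    have hKm : K ≤ m := by
      obtain ⟨S₀, hcard, hLI⟩ := hex
      have h1 := hLI.fintype_card_le_finrank
      rw [Module.finrank_fin_fun] at h1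
      simpa [Fintype.card_coe, hcard] using h1
    have hSn : S.card < n := lt_of_le_of_lt (le_trans hSK hKm) hmn
    -- the indicator vector of S
    set x : Fin n → ℝ := fun i => if i ∈ S then 1 else 0 with hxdef
    have hx0 : (0 : Fin n → ℝ) ≤ x := fun i => by
      by_cases h : i ∈ S <;> simp [hxdef, h]
    have hxpos : ∀ i, 0 < x i ↔ i ∈ S := fun i => by
      by_cases h : i ∈ S <;> simp [hxdef, h]
    have hxne : ∀ i, x i ≠ 0 ↔ i ∈ S := fun i => by
      by_cases h : i ∈ S <;> simp [hxdef, h]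
    have hxcard : {i : Fin n | x i ≠ 0}.ncard ≤ K := by
      have hset : {i : Fin n | x i ≠ 0} = (S : Set (Fin n)) := by ext i; simp [hxne i]
      rw [hset, Set.ncard_coe_finset]; exact hSK
    have hxLI : LinearIndependent ℝ
        (fun j : {i : Fin n // 0 < x i} => fun k : Fin m => A k j.1) :=
      li_transfer A (fun i => (hxpos i).symm) hSrank
    obtain ⟨-, -, hmin⟩ := hcond x hx0 hxcard hxLI
    -- per-index certificates
    have hcert : ∀ j ∉ S, ∃ u : Fin m → ℝ, (∀ i ∈ S, ∑ k, A k i * u k = 1) ∧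
        (∀ i, ∑ k, A k i * u k ≤ 1) ∧ ∑ k, A k j * u k < 1 := by
      intro j hj
      set g : (Fin n ⊕ ({i : Fin n // i ∈ S} ⊕ Unit)) → EuclideanSpace ℝ (Fin m ⊕ Unit) :=
        Sum.elim (fun i => emb (fun k => A k i) (-1))
          (Sum.elim (fun i => emb (fun k => -A k i.1) 1)
            (fun _ => emb (0 : Fin m → ℝ) (-1))) with hgdef
      -- converting sums over the subtype of S to sums over `Fin n`
      have hws : ∀ (c : Fin n ⊕ ({i : Fin n // i ∈ S} ⊕ Unit) → ℝ) (f : Fin n → ℝ),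
          ∑ i' : {i : Fin n // i ∈ S}, c (Sum.inr (Sum.inl i')) * f i'.1
            = ∑ i, (if h : i ∈ S then c (Sum.inr (Sum.inl ⟨i, h⟩)) else 0) * f i := by
        intro c f
        rw [← Finset.sum_subset (Finset.subset_univ S)
          (f := fun i => (if h : i ∈ S then c (Sum.inr (Sum.inl ⟨i, h⟩)) else 0) * f i)
          (fun i _ hi => by simp [hi])]
        rw [← Finset.sum_coe_sort S
          (fun i => (if h : i ∈ S then c (Sum.inr (Sum.inl ⟨i, h⟩)) else 0) * f i)]
        refine Finset.sum_congr rfl fun i' _ => ?_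
        simp only [dif_pos i'.2]
      -- decoding a membership in the cone generated by `g`
      have hdecode : ∀ c : Fin n ⊕ ({i : Fin n // i ∈ S} ⊕ Unit) → ℝ, (∀ i, 0 ≤ c i) →
          ∀ (b : Fin m → ℝ) (s : ℝ), (∑ i, c i • g i) = emb b s →
          ∃ (z w : Fin n → ℝ) (r : ℝ), (∀ i, 0 ≤ z i) ∧ (∀ i, 0 ≤ w i) ∧ 0 ≤ r ∧
            (∀ i ∉ S, w i = 0) ∧
            (∀ k, (∑ i, z i * A k i) - (∑ i, w i * A k i) = b k) ∧
            ((∑ i, w i) - (∑ i, z i) - r = s) := by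
        intro c hc0 b s hsum
        refine ⟨fun i => c (Sum.inl i),
          fun i => if h : i ∈ S then c (Sum.inr (Sum.inl ⟨i, h⟩)) else 0,
          c (Sum.inr (Sum.inr ())), fun i => hc0 _, fun i => ?_, hc0 _,
          fun i hi => dif_neg hi, ?_, ?_⟩
        · by_cases h : i ∈ S <;> simp [h, hc0]
        · intro k
          have hk : (∑ i, c i • g i) (Sum.inl k) = emb b s (Sum.inl k) := by rw [hsum]
          rw [euc_sum_apply] at hk
          simp only [euc_smul_apply, hgdef, Sum.elim_inl, Sum.elim_inr, emb_apply_inl,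
            Fintype.sum_sum_type, Fintype.sum_unique, Pi.zero_apply, mul_zero, add_zero,
            mul_neg, Finset.sum_neg_distrib] at hk
          have h2 := hws c (fun i => A k i)
          simp only at h2 ⊢
          linarith [hk, h2]
        · have hk : (∑ i, c i • g i) (Sum.inr ()) = emb b s (Sum.inr ()) := by rw [hsum]
          rw [euc_sum_apply] at hk
          simp only [euc_smul_apply, hgdef, Sum.elim_inl, Sum.elim_inr, emb_apply_inr,
            Fintype.sum_sum_type, Fintype.sum_unique, mul_one, mul_neg,
            Finset.sum_neg_distrib] at hk
          have h2 := hws c (fun _ => 1)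
          simp only [mul_one] at h2 ⊢
          linarith [hk, h2]
      have habs : ∀ v : Fin n → ℝ, (0:Fin n → ℝ) ≤ v → (∑ i, |v i|) = ∑ i, v i :=
        fun v hv => Finset.sum_congr rfl fun i _ => abs_of_nonneg (hv i)
      -- Case A : emb 0 1 is not in the cone
      have hnotA : ¬ ∃ c : Fin n ⊕ ({i : Fin n // i ∈ S} ⊕ Unit) → ℝ,
          (∀ i, 0 ≤ c i) ∧ ∑ i, c i • g i = emb (0 : Fin m → ℝ) 1 := by
        rintro ⟨c, hc0, hcsum⟩
        obtain ⟨z, w, r, hz0, hw0, hr0, hwS, heqk, heqs⟩ := hdecode c hc0 0 1 hcsum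
        simp only [Pi.zero_apply] at heqk
        have hW0 : (0:ℝ) ≤ ∑ i, w i := Finset.sum_nonneg fun i _ => hw0 i
        set t : ℝ := 1 / (2 * (1 + ∑ i, w i)) with htdef
        have ht : 0 < t := by rw [htdef]; positivity
        have ht1 : t * (2 * (1 + ∑ i, w i)) = 1 := by
          rw [htdef]; field_simp
        have htw : ∀ i, t * w i ≤ 1/2 := by
          intro i
          have h1 : w i ≤ ∑ i, w i := Finset.single_le_sum (fun i _ => hw0 i) (Finset.mem_univ i)
          nlinarith [mul_le_mul_of_nonneg_left h1 ht.le]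
        set v : Fin n → ℝ := fun i => x i + t * (z i - w i) with hvdef
        have hv0 : (0:Fin n → ℝ) ≤ v := by
          intro i
          by_cases hi : i ∈ S
          · have hx1 : x i = 1 := by simp [hxdef, hi]
            have h1 := htw i
            have h2 := mul_nonneg ht.le (hz0 i)
            simp only [hvdef, Pi.zero_apply, hx1]
            nlinarith
          · have hx1 : x i = 0 := by simp [hxdef, hi]
            simp only [hvdef, Pi.zero_apply, hx1, hwS i hi]
            nlinarith [mul_nonneg ht.le (hz0 i)]
        have hAv : A.mulVec v = A.mulVec x := by
          funext k
          rw [_root_.mulVec_eq_sum, _root_.mulVec_eq_sum]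
          have hZW : (∑ i, z i * A k i) = ∑ i, w i * A k i := by linarith [heqk k]
          calc ∑ i, A k i * v i
              = ∑ i, (A k i * x i + t * (z i * A k i) - t * (w i * A k i)) :=
                Finset.sum_congr rfl fun i _ => by simp only [hvdef]; ring
            _ = ∑ i, A k i * x i + t * (∑ i, z i * A k i) - t * (∑ i, w i * A k i) := by
                rw [Finset.sum_sub_distrib, Finset.sum_add_distrib, Finset.mul_sum,
                  Finset.mul_sum]
            _ = ∑ i, A k i * x i := by rw [hZW]; ring
        have hsumv : ∑ i, v i = ∑ i, x i + t * ((∑ i, z i) - (∑ i, w i)) := by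
          calc ∑ i, v i = ∑ i, (x i + t * z i - t * w i) :=
                Finset.sum_congr rfl fun i _ => by simp only [hvdef]; ring
            _ = ∑ i, x i + t * (∑ i, z i) - t * (∑ i, w i) := by
                rw [Finset.sum_sub_distrib, Finset.sum_add_distrib, Finset.mul_sum,
                  Finset.mul_sum]
            _ = ∑ i, x i + t * ((∑ i, z i) - (∑ i, w i)) := by ring
        have hlt : ∑ i, v i < ∑ i, x i := by
          rw [hsumv]
          nlinarith [mul_pos ht (show (0:ℝ) < 1 + r by linarith)]
        have hvx : v ≠ x := fun h => by rw [h] at hlt; exact lt_irrefl _ hlt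
        have hfin := hmin v hAv hv0 hvx
        rw [habs x hx0, habs v hv0] at hfin
        linarith
      -- Case B : emb (-A·j) 1 is not in the cone
      have hnotB : ¬ ∃ c : Fin n ⊕ ({i : Fin n // i ∈ S} ⊕ Unit) → ℝ,
          (∀ i, 0 ≤ c i) ∧ ∑ i, c i • g i = emb (fun k => -A k j) 1 := by
        rintro ⟨c, hc0, hcsum⟩
        obtain ⟨z, w, r, hz0, hw0, hr0, hwS, heqk, heqs⟩ :=
          hdecode c hc0 (fun k => -A k j) 1 hcsum
        set z' : Fin n → ℝ := fun i => z i + if i = j then 1 else 0 with hz'def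
        have hz'0 : ∀ i, 0 ≤ z' i := by
          intro i
          have h0 := hz0 i
          simp only [hz'def]
          by_cases h : i = j
          · rw [if_pos h]; linarith
          · rw [if_neg h]; linarith
        have hsz' : ∑ i, z' i = (∑ i, z i) + 1 := by
          simp only [hz'def]
          rw [Finset.sum_add_distrib, Finset.sum_ite_eq' Finset.univ j
            (fun _ => (1:ℝ)), if_pos (Finset.mem_univ j)]
        have heqk' : ∀ k, ∑ i, z' i * A k i = ∑ i, w i * A k i := by
          intro k
          have h1 : ∑ i, z' i * A k i = (∑ i, z i * A k i) + A k j := by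
            simp only [hz'def]
            calc ∑ i, (z i + if i = j then 1 else 0) * A k i
                = ∑ i, (z i * A k i + if i = j then A k i else 0) :=
                  Finset.sum_congr rfl fun i _ => by
                    by_cases h : i = j <;> simp [h] <;> try ring
              _ = (∑ i, z i * A k i) + A k j := by
                  rw [Finset.sum_add_distrib, Finset.sum_ite_eq' Finset.univ j
                    (fun i => A k i), if_pos (Finset.mem_univ j)]
          have h2 := heqk k
          linarith
        have hW0 : (0:ℝ) ≤ ∑ i, w i := Finset.sum_nonneg fun i _ => hw0 i
        set t : ℝ := 1 / (2 * (1 + ∑ i, w i)) with htdef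
        have ht : 0 < t := by rw [htdef]; positivity
        have ht1 : t * (2 * (1 + ∑ i, w i)) = 1 := by
          rw [htdef]; field_simp
        have htw : ∀ i, t * w i ≤ 1/2 := by
          intro i
          have h1 : w i ≤ ∑ i, w i := Finset.single_le_sum (fun i _ => hw0 i) (Finset.mem_univ i)
          nlinarith [mul_le_mul_of_nonneg_left h1 ht.le]
        set v : Fin n → ℝ := fun i => x i + t * (z' i - w i) with hvdef
        have hv0 : (0:Fin n → ℝ) ≤ v := by
          intro i
          by_cases hi : i ∈ S
          · have hx1 : x i = 1 := by simp [hxdef, hi]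
            have h1 := htw i
            have h2 := mul_nonneg ht.le (hz'0 i)
            simp only [hvdef, Pi.zero_apply, hx1]
            nlinarith
          · have hx1 : x i = 0 := by simp [hxdef, hi]
            simp only [hvdef, Pi.zero_apply, hx1, hwS i hi]
            nlinarith [mul_nonneg ht.le (hz'0 i)]
        have hAv : A.mulVec v = A.mulVec x := by
          funext k
          rw [_root_.mulVec_eq_sum, _root_.mulVec_eq_sum]
          have hZW := heqk' k
          calc ∑ i, A k i * v i
              = ∑ i, (A k i * x i + t * (z' i * A k i) - t * (w i * A k i)) :=
                Finset.sum_congr rfl fun i _ => by simp only [hvdef]; ring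
            _ = ∑ i, A k i * x i + t * (∑ i, z' i * A k i) - t * (∑ i, w i * A k i) := by
                rw [Finset.sum_sub_distrib, Finset.sum_add_distrib, Finset.mul_sum,
                  Finset.mul_sum]
            _ = ∑ i, A k i * x i := by rw [hZW]; ring
        have hsumv : ∑ i, v i = ∑ i, x i + t * ((∑ i, z' i) - (∑ i, w i)) := by
          calc ∑ i, v i = ∑ i, (x i + t * z' i - t * w i) :=
                Finset.sum_congr rfl fun i _ => by simp only [hvdef]; ring
            _ = ∑ i, x i + t * (∑ i, z' i) - t * (∑ i, w i) := by
                rw [Finset.sum_sub_distrib, Finset.sum_add_distrib, Finset.mul_sum,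
                  Finset.mul_sum]
            _ = ∑ i, x i + t * ((∑ i, z' i) - (∑ i, w i)) := by ring
        have hle : ∑ i, v i ≤ ∑ i, x i := by
          rw [hsumv, hsz']
          nlinarith [mul_nonneg ht.le hr0]
        have hvx : v ≠ x := by
          intro h
          have hvj := congrFun h j
          have hxj : x j = 0 := by simp [hxdef, hj]
          have hwj : w j = 0 := hwS j hj
          have hzj' : z' j = z j + 1 := by simp [hz'def]
          rw [hvdef] at hvj
          simp only [hxj, hwj, hzj'] at hvj
          nlinarith [mul_pos ht (show (0:ℝ) < z j + 1 by linarith [hz0 j]), hvj]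
        have hfin := hmin v hAv hv0 hvx
        rw [habs x hx0, habs v hv0] at hfin
        linarith
      -- apply Farkas twice
      obtain ⟨φA, hφA1, hφA2⟩ := farkas_cone g (emb (0 : Fin m → ℝ) 1) hnotA
      obtain ⟨φB, hφB1, hφB2⟩ := farkas_cone g (emb (fun k => -A k j) 1) hnotB
      have hIP1 : ∀ (φ : EuclideanSpace ℝ (Fin m ⊕ Unit)) (i : Fin n),
          ⟪g (Sum.inl i), φ⟫_ℝ = (∑ k, A k i * φ (Sum.inl k)) - φ (Sum.inr ()) := by
        intro φ i
        simp only [hgdef, Sum.elim_inl]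
        rw [euc_inner_emb]
        ring
      have hIP2 : ∀ (φ : EuclideanSpace ℝ (Fin m ⊕ Unit)) (i' : {i : Fin n // i ∈ S}),
          ⟪g (Sum.inr (Sum.inl i')), φ⟫_ℝ
            = -(∑ k, A k i'.1 * φ (Sum.inl k)) + φ (Sum.inr ()) := by
        intro φ i'
        simp only [hgdef, Sum.elim_inr, Sum.elim_inl]
        rw [euc_inner_emb]
        simp [neg_mul, Finset.sum_neg_distrib]
      have hIP3 : ∀ (φ : EuclideanSpace ℝ (Fin m ⊕ Unit)),
          ⟪g (Sum.inr (Sum.inr ())), φ⟫_ℝ = -φ (Sum.inr ()) := by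
        intro φ
        simp only [hgdef, Sum.elim_inr]
        rw [euc_inner_emb]
        simp
      have hA1 : ∀ i, ∑ k, A k i * φA (Sum.inl k) ≤ φA (Sum.inr ()) := by
        intro i; have := hφA1 (Sum.inl i); rw [hIP1] at this; linarith
      have hA2 : ∀ i, i ∈ S → φA (Sum.inr ()) ≤ ∑ k, A k i * φA (Sum.inl k) := by
        intro i hi; have := hφA1 (Sum.inr (Sum.inl ⟨i, hi⟩)); rw [hIP2] at this
        simpa using by linarith [this]
      have hA4 : 0 < φA (Sum.inr ()) := by
        rw [euc_inner_emb] at hφA2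
        simpa using hφA2
      have hB1 : ∀ i, ∑ k, A k i * φB (Sum.inl k) ≤ φB (Sum.inr ()) := by
        intro i; have := hφB1 (Sum.inl i); rw [hIP1] at this; linarith
      have hB2 : ∀ i, i ∈ S → φB (Sum.inr ()) ≤ ∑ k, A k i * φB (Sum.inl k) := by
        intro i hi; have := hφB1 (Sum.inr (Sum.inl ⟨i, hi⟩)); rw [hIP2] at this
        simpa using by linarith [this]
      have hB3 : 0 ≤ φB (Sum.inr ()) := by
        have := hφB1 (Sum.inr (Sum.inr ())); rw [hIP3] at this; linarith
      have hB4 : ∑ k, A k j * φB (Sum.inl k) < φB (Sum.inr ()) := by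
        rw [euc_inner_emb] at hφB2
        simp only [neg_mul, Finset.sum_neg_distrib, one_mul] at hφB2
        linarith
      set τ : ℝ := φA (Sum.inr ()) + φB (Sum.inr ()) with hτdef
      have hτ0 : 0 < τ := by rw [hτdef]; linarith
      refine ⟨fun k => (φA (Sum.inl k) + φB (Sum.inl k)) / τ, ?_, ?_, ?_⟩
      all_goals
        have hdot : ∀ i, ∑ k, A k i * ((φA (Sum.inl k) + φB (Sum.inl k)) / τ)
            = ((∑ k, A k i * φA (Sum.inl k)) + (∑ k, A k i * φB (Sum.inl k))) / τ := by
          intro i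
          rw [← Finset.sum_add_distrib, Finset.sum_div]
          exact Finset.sum_congr rfl fun k _ => by ring
      · intro i hi
        rw [hdot i]
        have e1 : ∑ k, A k i * φA (Sum.inl k) = φA (Sum.inr ()) :=
          le_antisymm (hA1 i) (hA2 i hi)
        have e2 : ∑ k, A k i * φB (Sum.inl k) = φB (Sum.inr ()) :=
          le_antisymm (hB1 i) (hB2 i hi)
        rw [e1, e2, ← hτdef, div_self hτ0.ne']
      · intro i
        rw [hdot i, div_le_one hτ0]
        linarith [hA1 i, hB1 i]
      · rw [hdot j, div_lt_one hτ0]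
        linarith [hA1 j, hB4]
    -- average the certificates over the complement of S
    choose uu hu1 hu2 hu3 using hcert
    have hNpos : 0 < Sᶜ.card := by
      rw [Finset.card_compl, Fintype.card_fin]
      omega
    have hN0 : (0:ℝ) < (Sᶜ.card : ℝ) := by exact_mod_cast hNpos
    have P : ∀ j : {y : Fin n // y ∈ Sᶜ}, j.1 ∉ S := fun j => Finset.mem_compl.mp j.2
    set ustar : Fin m → ℝ :=
      fun k => ((Sᶜ.card : ℝ))⁻¹ * ∑ j ∈ Sᶜ.attach, uu j.1 (P j) k with hustar
    refine ⟨A.transpose.mulVec ustar, ⟨ustar, rfl⟩, ?_, ?_⟩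
    all_goals
      have hηval : ∀ i, A.transpose.mulVec ustar i
          = ((Sᶜ.card : ℝ))⁻¹ * ∑ j ∈ Sᶜ.attach, ∑ k, A k i * uu j.1 (P j) k := by
        intro i
        rw [transpose_mulVec_eq_sum]
        have hstep : ∀ k, A k i * ustar k
            = ((Sᶜ.card : ℝ))⁻¹ * ∑ j ∈ Sᶜ.attach, A k i * uu j.1 (P j) k := by
          intro k
          simp only [hustar]
          rw [mul_left_comm, Finset.mul_sum]
        rw [Finset.sum_congr rfl (fun k _ => hstep k), ← Finset.mul_sum]
        congr 1
        exact Finset.sum_comm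
    · -- η = 1 on S
      intro i hi
      rw [hηval i]
      have hone : ∀ j ∈ Sᶜ.attach, ∑ k, A k i * uu j.1 (P j) k = 1 :=
        fun j _ => hu1 j.1 (P j) i hi
      rw [Finset.sum_congr rfl hone, Finset.sum_const, Finset.card_attach, nsmul_eq_mul,
        mul_one, inv_mul_cancel₀ hN0.ne']
    · -- η < 1 off S
      intro i hi
      rw [hηval i]
      have hlt : ∑ j ∈ Sᶜ.attach, ∑ k, A k i * uu j.1 (P j) k < (Sᶜ.card : ℝ) := by
        have hconst : ∑ _j ∈ Sᶜ.attach, (1:ℝ) = (Sᶜ.card : ℝ) := by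
          rw [Finset.sum_const, Finset.card_attach, nsmul_eq_mul, mul_one]
        rw [← hconst]
        exact Finset.sum_lt_sum (fun j _ => hu2 j.1 (P j) i)
          ⟨⟨i, Finset.mem_compl.mpr hi⟩, Finset.mem_attach _ _,
            hu3 i (P ⟨i, Finset.mem_compl.mpr hi⟩)⟩
      calc ((Sᶜ.card : ℝ))⁻¹ * ∑ j ∈ Sᶜ.attach, ∑ k, A k i * uu j.1 (P j) k
          < ((Sᶜ.card : ℝ))⁻¹ * (Sᶜ.card : ℝ) :=
            mul_lt_mul_of_pos_left hlt (inv_pos.mpr hN0)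
        _ = 1 := inv_mul_cancel₀ hN0.ne'
end

section
/- Let A be a real m×n matrix with m < n. Then Aᵀ has the partial weak range space property (PWRSP) of order K if and only if every x ∈ ℝ^n with x ≥ 0, ‖x‖₀ = K, and A_{J₊} of full column rank (where J₊ = {i : xᵢ > 0}) is the unique least ℓ1-norm nonnegative solution to the system Az = Ax. -/
open Matrix

/-- `Aᵀ` has the partial weak range space property (PWRSP) of order `K`. -/
def PWRSPorder {m n : ℕ} (A : Matrix (Fin m) (Fin n) ℝ) (K : ℕ) : Prop :=
  ∀ S : Finset (Fin n), S.card = K → fullColRank A S →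
    ∃ η : Fin n → ℝ, (∃ u : Fin m → ℝ, A.transpose.mulVec u = η) ∧
      (∀ i ∈ S, η i = 1) ∧ (∀ i ∉ S, η i < 1)

/-- Represent a linear functional on `k → ℝ` via dot product. -/
lemma functional_eq_dot {k : Type*} [Fintype k] [DecidableEq k] (φ : (k → ℝ) →ₗ[ℝ] ℝ)
    (x : k → ℝ) :
    φ x = x ⬝ᵥ (fun j => φ (Pi.single j 1)) := by
  have hx : x = ∑ j, Pi.single j (x j) := (Finset.univ_sum_single x).symm
  calc φ x = φ (∑ j, Pi.single j (x j)) := by rw [← hx]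
    _ = ∑ j, φ (Pi.single j (x j)) := map_sum φ _ _
    _ = ∑ j, x j * φ (Pi.single j 1) := by
        refine Finset.sum_congr rfl fun j _ => ?_
        have : Pi.single j (x j) = x j • (Pi.single j (1:ℝ) : k → ℝ) := by
          ext l
          by_cases h : l = j <;> simp [Pi.single_apply, h]
        rw [this, _root_.map_smul, smul_eq_mul]
    _ = x ⬝ᵥ (fun j => φ (Pi.single j 1)) := rfl

/-- If `y` is not in a submodule `U` of `ℝ^k`, there is a vector `v` orthogonal to `U`
with `y ⬝ᵥ v = 1`. -/
lemma exists_dot_sep {k : Type*} [Fintype k] [DecidableEq k] (U : Submodule ℝ (k → ℝ))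
    (y : k → ℝ) (hy : y ∉ U) :
    ∃ v : k → ℝ, (∀ x ∈ U, x ⬝ᵥ v = 0) ∧ y ⬝ᵥ v = 1 := by
  have hq : U.mkQ y ≠ 0 := by
    simpa [Submodule.Quotient.mk_eq_zero] using hy
  have : ¬ ∀ φ : Module.Dual ℝ ((k → ℝ) ⧸ U), φ (U.mkQ y) = 0 := by
    rw [Module.forall_dual_apply_eq_zero_iff]; exact hq
  push_neg at this
  obtain ⟨φ, hφ⟩ := this
  set ψ : (k → ℝ) →ₗ[ℝ] ℝ := (φ (U.mkQ y))⁻¹ • (φ.comp U.mkQ) with hψ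
  refine ⟨fun j => ψ (Pi.single j 1), fun x hx => ?_, ?_⟩
  · rw [← functional_eq_dot]
    simp [hψ, Submodule.Quotient.mk_eq_zero, (Submodule.Quotient.mk_eq_zero U).2 hx]
  · rw [← functional_eq_dot]
    simp only [hψ, LinearMap.smul_apply, LinearMap.comp_apply, smul_eq_mul]
    exact inv_mul_cancel₀ hφ

lemma dot_eq_zero_of_forall {k : Type*} [Fintype k] [DecidableEq k] (w : k → ℝ)
    (h : ∀ u : k → ℝ, w ⬝ᵥ u = 0) : w = 0 := by
  ext j
  have := h (Pi.single j 1)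
  simpa [dotProduct, Pi.single_apply, Finset.sum_ite_eq', mul_comm] using this

lemma exists_ones {m n : ℕ} (A : Matrix (Fin m) (Fin n) ℝ) (S : Finset (Fin n))
    (h : fullColRank A S) : ∃ u₀ : Fin m → ℝ, ∀ j ∈ S, A.transpose.mulVec u₀ j = 1 := by
  classical
  set Φ : (Fin m → ℝ) →ₗ[ℝ] ({i : Fin n // i ∈ S} → ℝ) :=
    { toFun := fun u => fun j => A.transpose.mulVec u j.1
      map_add' := by intro u v; ext j; simp [Matrix.mulVec_add]
      map_smul' := by intro c u; ext j; simp [Matrix.mulVec_smul] }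
  by_cases hr : (fun _ => (1:ℝ)) ∈ LinearMap.range Φ
  · obtain ⟨u₀, hu₀⟩ := hr
    exact ⟨u₀, fun j hj => congrFun hu₀ ⟨j, hj⟩⟩
  · exfalso
    obtain ⟨v, hv0, hv1⟩ := exists_dot_sep _ _ hr
    have hall : ∀ u : Fin m → ℝ,
        (∑ j : {i : Fin n // i ∈ S}, v j • (fun k => A k j.1)) ⬝ᵥ u = 0 := by
      intro u
      have h1 : Φ u ⬝ᵥ v = 0 := hv0 _ ⟨u, rfl⟩
      rw [← h1]
      simp only [dotProduct, Finset.sum_apply, Pi.smul_apply, Finset.sum_mul,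
        smul_eq_mul]
      rw [Finset.sum_comm]
      refine Finset.sum_congr rfl fun j _ => ?_
      simp only [Φ, LinearMap.coe_mk, AddHom.coe_mk, Matrix.mulVec, dotProduct,
        Matrix.transpose_apply, Finset.sum_mul, Finset.mul_sum]
      refine Finset.sum_congr rfl fun k _ => by ring
    have hz := dot_eq_zero_of_forall _ hall
    have hv := Fintype.linearIndependent_iff.1 h v hz
    have hv' : v = 0 := funext hv
    rw [hv'] at hv1
    simp at hv1

/-- If `z` agrees with a vector supported in `S` outside `S`, has the same image under `A`,
and `A_S` has full column rank, then `z = x`. -/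
lemma eq_of_support_subset {m n : ℕ} (A : Matrix (Fin m) (Fin n) ℝ) (S : Finset (Fin n))
    (h : fullColRank A S) (w : Fin n → ℝ) (hw : ∀ i ∉ S, w i = 0)
    (hAw : A.mulVec w = 0) : w = 0 := by
  classical
  have hsum : ∀ k : Fin m, ∑ j : {i : Fin n // i ∈ S}, w j.1 * A k j.1 = 0 := by
    intro k
    have h1 : ∑ j : {i : Fin n // i ∈ S}, w j.1 * A k j.1 = ∑ i ∈ S, w i * A k i :=
      Finset.sum_coe_sort S (fun i => w i * A k i)
    have h2 : ∑ i ∈ S, w i * A k i = ∑ i, w i * A k i := by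
      refine Finset.sum_subset (Finset.subset_univ S) fun i _ hi => ?_
      rw [hw i hi, zero_mul]
    have h3 : ∑ i, w i * A k i = A.mulVec w k := by
      simp [Matrix.mulVec, dotProduct, mul_comm]
    rw [h1, h2, h3, hAw]
    rfl
  have hli := Fintype.linearIndependent_iff.1 h (fun j => w j.1)
  have hz : ∀ j : {i : Fin n // i ∈ S}, w j.1 = 0 := by
    apply hli
    ext k
    simpa [mul_comm] using hsum k
  ext i
  by_cases hi : i ∈ S
  · exact hz ⟨i, hi⟩
  · exact hw i hi

theorem stmt_18 {m n : ℕ} (hmn : m < n) (A : Matrix (Fin m) (Fin n) ℝ) (K : ℕ) :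
    PWRSPorder A K ↔
      ∀ x : Fin n → ℝ, 0 ≤ x → {i : Fin n | x i ≠ 0}.ncard = K →
        LinearIndependent ℝ (fun j : {i : Fin n // 0 < x i} =>
          fun k : Fin m => A k j.1) →
        uniqueLeastL1 A (A.mulVec x) x := by
  classical
  constructor
  · -- forward direction
    intro hP x hx hcard hLI
    set S : Finset (Fin n) := Finset.univ.filter (fun i => x i ≠ 0) with hS
    have hpos : ∀ i, x i ≠ 0 ↔ 0 < x i := fun i =>
      ⟨fun h => lt_of_le_of_ne (hx i) (Ne.symm h), fun h => ne_of_gt h⟩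
    have hmemS : ∀ i, i ∈ S ↔ 0 < x i := by
      intro i; simp [hS, hpos i]
    have hScard : S.card = K := by
      have hset : {i : Fin n | x i ≠ 0} = ↑S := by
        ext i; simp [hS]
      rw [← hcard, hset, Set.ncard_coe_finset]
    have hSrank : fullColRank A S := by
      obtain ⟨e, he⟩ : ∃ e : {i : Fin n // i ∈ S} ≃ {i : Fin n // 0 < x i},
          ∀ j, ((e j) : Fin n) = j.1 :=
        ⟨⟨fun j => ⟨j.1, (hmemS j.1).1 j.2⟩, fun j => ⟨j.1, (hmemS j.1).2 j.2⟩,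
          fun j => Subtype.ext rfl, fun j => Subtype.ext rfl⟩, fun j => rfl⟩
      have h2 : LinearIndependent ℝ
          ((fun j : {i : Fin n // 0 < x i} => fun k : Fin m => A k j.1) ∘ e) :=
        hLI.comp e e.injective
      unfold fullColRank
      convert h2 using 1
      ext j k
      simp [Function.comp, he j]
    obtain ⟨η, ⟨u, hu⟩, hη1, hη2⟩ := hP S hScard hSrank
    refine ⟨rfl, hx, ?_⟩
    intro z hz hz0 hzx
    have hηx : ∀ i, x i = η i * x i := by
      intro i
      by_cases hxi : x i = 0
      · rw [hxi, mul_zero]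
      · rw [hη1 i (by simp [hS, hxi]), one_mul]
    have hdx : η ⬝ᵥ x = u ⬝ᵥ A.mulVec x := by
      rw [← hu, Matrix.mulVec_transpose, Matrix.dotProduct_mulVec]
    have hdz : η ⬝ᵥ z = u ⬝ᵥ A.mulVec z := by
      rw [← hu, Matrix.mulVec_transpose, Matrix.dotProduct_mulVec]
    have hzsupp : ∃ i₀, i₀ ∉ S ∧ 0 < z i₀ := by
      by_contra hcon
      push_neg at hcon
      apply hzx
      have hzx0 : ∀ i ∉ S, (z - x) i = 0 := by
        intro i hi
        have hzi : (0:ℝ) ≤ z i := hz0 i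
        have h1 : z i = 0 := le_antisymm (hcon i hi) hzi
        have h2 : x i = 0 := by
          by_contra h2
          exact hi (by simp [hS, h2])
        simp [h1, h2]
      have hAzx : A.mulVec (z - x) = 0 := by
        rw [Matrix.mulVec_sub, hz, sub_self]
      have := eq_of_support_subset A S hSrank (z - x) hzx0 hAzx
      exact sub_eq_zero.1 this
    obtain ⟨i₀, hi₀S, hi₀pos⟩ := hzsupp
    have key : ∑ i, η i * z i < ∑ i, z i := by
      refine Finset.sum_lt_sum (fun i _ => ?_) ⟨i₀, Finset.mem_univ i₀, ?_⟩
      · by_cases hiS : i ∈ S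
        · rw [hη1 i hiS, one_mul]
        · calc η i * z i ≤ 1 * z i :=
                mul_le_mul_of_nonneg_right (le_of_lt (hη2 i hiS)) (hz0 i)
            _ = z i := one_mul _
      · calc η i₀ * z i₀ < 1 * z i₀ := mul_lt_mul_of_pos_right (hη2 i₀ hi₀S) hi₀pos
          _ = z i₀ := one_mul _
    calc ∑ i, |x i| = ∑ i, x i := by
          refine Finset.sum_congr rfl fun i _ => abs_of_nonneg (hx i)
      _ = ∑ i, η i * x i := Finset.sum_congr rfl fun i _ => hηx i
      _ = η ⬝ᵥ x := rfl
      _ = u ⬝ᵥ A.mulVec x := hdx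
      _ = u ⬝ᵥ A.mulVec z := by rw [hz]
      _ = η ⬝ᵥ z := hdz.symm
      _ = ∑ i, η i * z i := rfl
      _ < ∑ i, z i := key
      _ = ∑ i, |z i| := Finset.sum_congr rfl fun i _ => (abs_of_nonneg (hz0 i)).symm
  · -- reverse direction
    intro h S hScard hSrank
    set x : Fin n → ℝ := fun i => if i ∈ S then 1 else 0 with hxdef
    have hx0 : 0 ≤ x := by
      intro i
      by_cases hi : i ∈ S <;> simp [hxdef, hi]
    have hxpos : ∀ i, 0 < x i ↔ i ∈ S := by
      intro i
      by_cases hi : i ∈ S <;> simp [hxdef, hi]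
    have hxsupp : {i : Fin n | x i ≠ 0} = ↑S := by
      ext i
      by_cases hi : i ∈ S <;> simp [hxdef, hi]
    have hLI' : LinearIndependent ℝ (fun j : {i : Fin n // 0 < x i} =>
        fun k : Fin m => A k j.1) := by
      obtain ⟨e, he⟩ : ∃ e : {i : Fin n // 0 < x i} ≃ {i : Fin n // i ∈ S},
          ∀ j, ((e j) : Fin n) = j.1 :=
        ⟨⟨fun j => ⟨j.1, (hxpos j.1).1 j.2⟩, fun j => ⟨j.1, (hxpos j.1).2 j.2⟩,
          fun j => Subtype.ext rfl, fun j => Subtype.ext rfl⟩, fun j => rfl⟩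
      have h2 : LinearIndependent ℝ
          ((fun j : {i : Fin n // i ∈ S} => fun k : Fin m => A k j.1) ∘ e) :=
        hSrank.comp e e.injective
      convert h2 using 1
      ext j k
      simp [Function.comp, he j]
    obtain ⟨-, -, hmin⟩ :=
      h x hx0 (by rw [hxsupp, Set.ncard_coe_finset, hScard]) hLI'
    -- key positivity fact
    have key : ∀ d : Fin n → ℝ, A.mulVec d = 0 → (∀ j ∉ S, 0 ≤ d j) → d ≠ 0 →
        0 < ∑ j, d j := by
      intro d hd hdpos hdne
      set t : ℝ := (1 + ∑ j, |d j|)⁻¹ with htdef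
      have habs : (0:ℝ) ≤ ∑ j, |d j| := Finset.sum_nonneg fun j _ => abs_nonneg _
      have ht : 0 < t := inv_pos.2 (by linarith)
      have htmul : t * (1 + ∑ j, |d j|) = 1 := inv_mul_cancel₀ (by linarith)
      set z : Fin n → ℝ := x + t • d with hzdef
      have hz0 : 0 ≤ z := by
        intro j
        by_cases hj : j ∈ S
        · have h1 : |d j| ≤ 1 + ∑ i, |d i| := by
            have := Finset.single_le_sum (f := fun i => |d i|)
              (fun i _ => abs_nonneg _) (Finset.mem_univ j)
            linarith
          have h2 : t * |d j| ≤ 1 := by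
            calc t * |d j| ≤ t * (1 + ∑ i, |d i|) :=
                  mul_le_mul_of_nonneg_left h1 (le_of_lt ht)
              _ = 1 := htmul
          have h3 : -(t * d j) ≤ 1 := by
            have := neg_abs_le (d j)
            nlinarith [abs_nonneg (d j)]
          have : z j = 1 + t * d j := by simp [hzdef, hxdef, hj]
          rw [this]
          show (0:ℝ) ≤ 1 + t * d j
          linarith
        · have : z j = t * d j := by simp [hzdef, hxdef, hj]
          rw [this]
          show (0:ℝ) ≤ t * d j
          exact mul_nonneg (le_of_lt ht) (hdpos j hj)
      have hzfeas : A.mulVec z = A.mulVec x := by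
        rw [hzdef, Matrix.mulVec_add, Matrix.mulVec_smul, hd]
        simp
      have hzne : z ≠ x := by
        intro hc
        apply hdne
        have : t • d = 0 := by
          have := congrArg (fun w => w - x) hc
          simpa [hzdef] using this
        have := congrArg (fun w => t⁻¹ • w) this
        simpa [smul_smul, inv_mul_cancel₀ (ne_of_gt ht)] using this
      have hlt := hmin z hzfeas hz0 hzne
      have hxs : ∑ i, |x i| = ∑ i, x i :=
        Finset.sum_congr rfl fun i _ => abs_of_nonneg (hx0 i)
      have hzs : ∑ i, |z i| = ∑ i, z i :=
        Finset.sum_congr rfl fun i _ => abs_of_nonneg (hz0 i)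
      have hzsum : ∑ i, z i = ∑ i, x i + t * ∑ i, d i := by
        simp only [hzdef, Pi.add_apply, Pi.smul_apply, smul_eq_mul]
        rw [Finset.sum_add_distrib, ← Finset.mul_sum]
      rw [hxs, hzs, hzsum] at hlt
      nlinarith
    obtain ⟨u₀, hu₀⟩ := exists_ones A S hSrank
    set Mset : Set (Fin n → ℝ) := {w | ∃ u : Fin m → ℝ,
      (∀ j ∈ S, A.transpose.mulVec u j = 1) ∧ w = fun j => 1 - A.transpose.mulVec u j}
      with hMdef
    set O : Set (Fin n → ℝ) := {w | ∀ j ∉ S, 0 < w j} with hOdef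
    have hw₀M : (fun j => 1 - A.transpose.mulVec u₀ j) ∈ Mset := ⟨u₀, hu₀, rfl⟩
    by_cases hMO : (Mset ∩ O).Nonempty
    · obtain ⟨w, ⟨u, huS, hw⟩, hwO⟩ := hMO
      refine ⟨A.transpose.mulVec u, ⟨u, rfl⟩, huS, fun i hi => ?_⟩
      have h1 : 0 < w i := hwO i hi
      have h2 : w i = 1 - A.transpose.mulVec u i := congrFun hw i
      rw [h2] at h1
      linarith
    · exfalso
      have hO_open : IsOpen O := by
        have : O = ⋂ j : {j : Fin n // j ∉ S}, {w : Fin n → ℝ | 0 < w j.1} := by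
          ext w
          simp [hOdef]
        rw [this]
        exact isOpen_iInter_of_finite fun j =>
          isOpen_lt continuous_const (continuous_apply j.1)
      have hO_conv : Convex ℝ O := by
        intro w1 h1 w2 h2 a b ha hb hab
        intro j hj
        have hw1 := h1 j hj
        have hw2 := h2 j hj
        show 0 < a * w1 j + b * w2 j
        rcases eq_or_lt_of_le ha with ha0 | ha0
        · have hb1 : b = 1 := by linarith
          rw [← ha0, hb1]; simpa using hw2
        · nlinarith
      have hM_conv : Convex ℝ Mset := by
        rintro w1 ⟨u1, hu1, rfl⟩ w2 ⟨u2, hu2, rfl⟩ a b ha hb hab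
        refine ⟨a • u1 + b • u2, fun j hj => ?_, ?_⟩
        · rw [Matrix.mulVec_add, Matrix.mulVec_smul, Matrix.mulVec_smul]
          simp only [Pi.add_apply, Pi.smul_apply, smul_eq_mul]
          rw [hu1 j hj, hu2 j hj]
          linarith
        · ext j
          rw [Matrix.mulVec_add, Matrix.mulVec_smul, Matrix.mulVec_smul]
          simp only [Pi.add_apply, Pi.smul_apply, smul_eq_mul]
          linarith
      have hdisj : Disjoint O Mset := by
        rw [Set.not_nonempty_iff_eq_empty] at hMO
        rw [Set.disjoint_iff_inter_eq_empty, Set.inter_comm]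
        exact hMO
      obtain ⟨f, c, hfO, hfM⟩ := geometric_hahn_banach_open hO_conv hO_open hM_conv hdisj
      set p : Fin n → ℝ := fun j => f (Pi.single j 1) with hpdef
      have hf_eq : ∀ w : Fin n → ℝ, f w = w ⬝ᵥ p := fun w =>
        functional_eq_dot (f : (Fin n → ℝ) →ₗ[ℝ] ℝ) w
      have hones : (fun _ => (1:ℝ)) ∈ O := fun j _ => one_pos
      have hf1 : f (fun _ => (1:ℝ)) < c := hfO _ hones
      have haux : ∀ (j : Fin n) (t : ℝ), f ((fun _ => (1:ℝ)) + t • (Pi.single j 1 : Fin n → ℝ))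
          = f (fun _ => (1:ℝ)) + t * p j := by
        intro j t
        rw [map_add, _root_.map_smul, smul_eq_mul]
      have hpS : ∀ j ∈ S, p j = 0 := by
        intro j hj
        by_contra hpj
        have hmem : ∀ t : ℝ, ((fun _ => (1:ℝ)) + t • (Pi.single j 1 : Fin n → ℝ)) ∈ O := by
          intro t i hi
          have hij : i ≠ j := fun hc => hi (hc ▸ hj)
          simp [Pi.single_apply, hij]
        have hlt := hfO _ (hmem ((c - f (fun _ => (1:ℝ))) / p j))
        rw [haux, div_mul_cancel₀ _ hpj] at hlt
        linarith
      have hpS' : ∀ j ∉ S, p j ≤ 0 := by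
        intro j hj
        by_contra hpj
        push_neg at hpj
        set t : ℝ := (c - f (fun _ => (1:ℝ)) + 1) / p j with htdef
        have ht : 0 < t := div_pos (by linarith) hpj
        have hmem : ((fun _ => (1:ℝ)) + t • (Pi.single j 1 : Fin n → ℝ)) ∈ O := by
          intro i _
          by_cases hij : i = j
          · subst hij
            simp only [Pi.add_apply, Pi.smul_apply, Pi.single_eq_same, smul_eq_mul, mul_one]
            linarith
          · simp [Pi.single_apply, hij]
        have hlt := hfO _ hmem
        rw [haux, htdef, div_mul_cancel₀ _ (ne_of_gt hpj)] at hlt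
        linarith
      have hc0 : 0 ≤ c := by
        by_contra hc
        push_neg at hc
        rcases le_or_gt 0 (f (fun _ => (1:ℝ))) with h1 | h1
        · linarith
        · have hmem : ((c / (2 * f (fun _ => (1:ℝ)))) • (fun _ => (1:ℝ)) : Fin n → ℝ) ∈ O := by
            intro i _
            have : 0 < c / (2 * f (fun _ => (1:ℝ))) := div_pos_of_neg_of_neg hc (by linarith)
            simpa using this
          have hlt := hfO _ hmem
          rw [_root_.map_smul, smul_eq_mul] at hlt
          have hne : f (fun _ => (1:ℝ)) ≠ 0 := ne_of_lt h1
          have heq : c / (2 * f (fun _ => (1:ℝ))) * f (fun _ => (1:ℝ)) = c / 2 := by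
            field_simp
          rw [heq] at hlt
          linarith
      set q : Fin n → ℝ := fun j => -p j with hqdef
      have hq0 : ∀ j, 0 ≤ q j := by
        intro j
        by_cases hj : j ∈ S
        · simp [hqdef, hpS j hj]
        · simp only [hqdef, neg_nonneg]; exact hpS' j hj
      have hqS : ∀ j ∈ S, q j = 0 := fun j hj => by simp [hqdef, hpS j hj]
      have hqM : ∀ w ∈ Mset, w ⬝ᵥ q ≤ 0 := by
        intro w hwM
        have h1 : c ≤ f w := hfM w hwM
        rw [hf_eq] at h1
        have h2 : w ⬝ᵥ q = -(w ⬝ᵥ p) := by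
          simp [hqdef, dotProduct, Finset.sum_neg_distrib]
        rw [h2]
        linarith
      have hqne : q ≠ 0 := by
        intro hq
        have hp : p = 0 := by
          ext j
          have := congrFun hq j
          simp only [hqdef, Pi.zero_apply] at this ⊢
          linarith
        have h1 : f (fun _ => (1:ℝ)) = 0 := by rw [hf_eq, hp]; simp
        have h2 := hfM _ hw₀M
        rw [hf_eq, hp] at h2
        simp at h2
        rw [h1] at hf1
        linarith
      -- the masked map
      set maskS : (Fin n → ℝ) →ₗ[ℝ] (Fin n → ℝ) :=
        { toFun := fun cv => fun j => if j ∈ S then cv j else 0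
          map_add' := by intro a b; ext j; by_cases hj : j ∈ S <;> simp [hj]
          map_smul' := by intro r a; ext j; by_cases hj : j ∈ S <;> simp [hj] }
        with hmaskdef
      set T : (Fin n → ℝ) →ₗ[ℝ] (Fin m → ℝ) := A.mulVecLin.comp maskS with hTdef
      have hColS : A.mulVec q ∈ LinearMap.range T := by
        by_contra hnot
        obtain ⟨v, hv0, hv1⟩ := exists_dot_sep _ _ hnot
        have hvS : ∀ j ∈ S, A.transpose.mulVec v j = 0 := by
          intro j hj
          have h1 : T (Pi.single j 1) ⬝ᵥ v = 0 := hv0 _ ⟨Pi.single j 1, rfl⟩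
          have hmask1 : maskS (Pi.single j 1) = (Pi.single j 1 : Fin n → ℝ) := by
            ext i
            by_cases hij : i = j
            · subst hij; simp [hmaskdef, hj]
            · simp [hmaskdef, Pi.single_apply, hij]
          have h2 : T (Pi.single j 1) = A.mulVec (Pi.single j 1) := by
            rw [hTdef, LinearMap.comp_apply, hmask1, Matrix.mulVecLin_apply]
          rw [h2] at h1
          have h3 : A.mulVec (Pi.single j 1) ⬝ᵥ v = A.transpose.mulVec v j := by
            simp [Matrix.mulVec, dotProduct, Matrix.transpose_apply,
              Pi.single_apply, Finset.sum_mul, mul_comm]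
          rw [h3] at h1
          exact h1
        have hAq : ∀ tt : ℝ, (fun j => 1 - A.transpose.mulVec (u₀ + tt • v) j) ∈ Mset := by
          intro tt
          refine ⟨u₀ + tt • v, fun j hj => ?_, rfl⟩
          rw [Matrix.mulVec_add, Matrix.mulVec_smul]
          simp only [Pi.add_apply, Pi.smul_apply, smul_eq_mul]
          rw [hu₀ j hj, hvS j hj]
          ring
        have hdotv : (A.transpose.mulVec v) ⬝ᵥ q = 1 := by
          have : (A.transpose.mulVec v) ⬝ᵥ q = v ⬝ᵥ A.mulVec q := by
            rw [Matrix.mulVec_transpose, ← Matrix.dotProduct_mulVec]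
          rw [this, dotProduct_comm]
          exact hv1
        set w0 : Fin n → ℝ := fun j => 1 - A.transpose.mulVec u₀ j with hw0def
        have hwt : ∀ tt : ℝ, w0 ⬝ᵥ q - tt ≤ 0 := by
          intro tt
          have h1 := hqM _ (hAq tt)
          have h2 : (fun j => 1 - A.transpose.mulVec (u₀ + tt • v) j) ⬝ᵥ q
              = w0 ⬝ᵥ q - tt * ((A.transpose.mulVec v) ⬝ᵥ q) := by
            simp only [dotProduct, hw0def, Matrix.mulVec_add, Matrix.mulVec_smul,
              Pi.add_apply, Pi.smul_apply, smul_eq_mul]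
            rw [Finset.mul_sum, ← Finset.sum_sub_distrib]
            refine Finset.sum_congr rfl fun j _ => ?_
            ring
          rw [h2, hdotv, mul_one] at h1
          exact h1
        have := hwt (w0 ⬝ᵥ q - 1)
        linarith
      obtain ⟨cv, hcv⟩ := hColS
      set d : Fin n → ℝ := q - maskS cv with hddef
      have hdA : A.mulVec d = 0 := by
        have : A.mulVec (maskS cv) = A.mulVec q := hcv
        rw [hddef, Matrix.mulVec_sub, this, sub_self]
      have hdpos : ∀ j ∉ S, 0 ≤ d j := by
        intro j hj
        have : maskS cv j = 0 := by simp [hmaskdef, hj]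
        simp only [hddef, Pi.sub_apply, this, sub_zero]
        exact hq0 j
      have hdq : ∀ j ∉ S, d j = q j := by
        intro j hj
        have : maskS cv j = 0 := by simp [hmaskdef, hj]
        simp [hddef, this]
      have hdne : d ≠ 0 := by
        intro hc
        apply hqne
        ext j
        by_cases hj : j ∈ S
        · simp [hqS j hj]
        · have := congrFun hc j
          rw [hdq j hj] at this
          simpa using this
      have hpos := key d hdA hdpos hdne
      set w0 : Fin n → ℝ := fun j => 1 - A.transpose.mulVec u₀ j with hw0def
      have hw0S : ∀ j ∈ S, w0 j = 0 := by
        intro j hj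
        simp [hw0def, hu₀ j hj]
      have hcomp : w0 ⬝ᵥ d = w0 ⬝ᵥ q := by
        refine Finset.sum_congr rfl fun j _ => ?_
        by_cases hj : j ∈ S
        · rw [hw0S j hj]; ring
        · rw [hdq j hj]
      have hcomp2 : w0 ⬝ᵥ d = ∑ j, d j - u₀ ⬝ᵥ A.mulVec d := by
        rw [Matrix.dotProduct_mulVec, ← Matrix.mulVec_transpose]
        simp only [dotProduct, hw0def]
        rw [← Finset.sum_sub_distrib]
        refine Finset.sum_congr rfl fun j _ => ?_
        ring
      have hfinal := hqM _ hw₀M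
      have hw0q : w0 ⬝ᵥ q ≤ 0 := hfinal
      rw [← hcomp, hcomp2, hdA] at hw0q
      simp only [dotProduct_zero, sub_zero] at hw0q
      linarith
end
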